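/- arXiv:2308.06059 — 13 statements merged into one kernel-verified Lean document; each statement's English description precedes it below -/
import Mathlib

section
/- Let n ≥ 1 be an integer and let ω ∈ ℝ \ ℤ. Consider the n×n Toeplitz matrix 𝔗 whose (k,ℓ) entry (0 ≤ k,ℓ ≤ n−1) is μ_{ℓ−k}, where μ_j = (−1)^j sin(πω)/(π(j+ω)) for j ∈ ℤ. Then det 𝔗 = (sin(πω)/(πω))^n · (∏_{ℓ=0}^{n−1} (ℓ!)²) / (∏_{k=1}^{n−1} (k² − ω²)^{n−k}). -/
open Finset Polynomial

theorem aux_eval_matrix {n : ℕ} (v : Fin n → ℝ) (p : Fin n → ℝ[X])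
    (h_deg : ∀ j, (p j).natDegree < n) :
    Matrix.of (fun i j => ((p j).eval (v i))) =
    (Matrix.vandermonde v) * (Matrix.of (fun (i j : Fin n) => (p j).coeff i)) := by
  ext i j
  rw [Matrix.mul_apply, Matrix.of_apply, eval, eval₂]
  simp only [eq_intCast, Int.cast_id, Matrix.vandermonde]
  have : (p j).support ⊆ range n := supp_subset_range (h_deg j)
  rw [Polynomial.sum_eq_of_subset _ (fun j => zero_mul ((v i) ^ j)) this,
    ← Fin.sum_univ_eq_sum_range]
  congr
  ext k
  rw [mul_comm, Matrix.of_apply, RingHom.id_apply]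
  rfl

theorem cauchy_det {n : ℕ} (x y : Fin n → ℝ)
    (hy : Function.Injective y)
    (hxy : ∀ i j, x i + y j ≠ 0) :
    (Matrix.of fun i j : Fin n => (x i + y j)⁻¹).det =
      (∏ i : Fin n, ∏ j ∈ Finset.Ioi i, (x j - x i)) *
      (∏ i : Fin n, ∏ j ∈ Finset.Ioi i, (y j - y i)) /
      ∏ i : Fin n, ∏ j : Fin n, (x i + y j) := by
  rcases Nat.eq_zero_or_pos n with h0 | hn
  · subst h0; simp [Matrix.det_fin_zero]
  set p : Fin n → ℝ[X] := fun j => ∏ k ∈ univ.erase j, (X + C (y k)) with hp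
  have hdeg : ∀ j, (p j).natDegree < n := by
    intro j
    rw [hp, Polynomial.natDegree_prod _ _ (fun k _ => X_add_C_ne_zero (y k))]
    simp only [natDegree_X_add_C, Finset.sum_const, smul_eq_mul, mul_one]
    rw [Finset.card_erase_of_mem (Finset.mem_univ j), Finset.card_univ, Fintype.card_fin]
    omega
  -- values of p at points
  have hpeval : ∀ (t : ℝ) (j : Fin n), (p j).eval t = ∏ k ∈ univ.erase j, (t + y k) := by
    intro t j
    rw [hp]; simp [eval_prod]
  set C : Matrix (Fin n) (Fin n) ℝ := Matrix.of fun i j => (p j).coeff i with hC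
  have hF : (Matrix.of fun i j => (p j).eval (x i)) = Matrix.vandermonde x * C :=
    aux_eval_matrix x p hdeg
  have hG : (Matrix.of fun i j => (p j).eval (-(y i))) =
      Matrix.vandermonde (fun i => -(y i)) * C :=
    aux_eval_matrix _ p hdeg
  set d : Fin n → ℝ := fun j => ∏ k ∈ univ.erase j, (y k - y j) with hd
  have hGdiag : (Matrix.of fun i j : Fin n => (p j).eval (-(y i))) = Matrix.diagonal d := by
    ext i j
    rw [Matrix.of_apply, hpeval, Matrix.diagonal_apply]
    by_cases hij : i = j
    · subst hij
      rw [if_pos rfl, hd]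
      exact Finset.prod_congr rfl fun k _ => by ring
    · rw [if_neg hij]
      exact Finset.prod_eq_zero (Finset.mem_erase.mpr ⟨hij, mem_univ i⟩) (by ring)
  have hVy : (Matrix.vandermonde fun i => -(y i)).det = ∏ i : Fin n, ∏ j ∈ Ioi i, (y i - y j) := by
    rw [Matrix.det_vandermonde]
    exact Finset.prod_congr rfl fun i _ => Finset.prod_congr rfl fun j _ => by ring
  have hVyne : (Matrix.vandermonde fun i => -(y i)).det ≠ 0 :=
    Matrix.det_vandermonde_ne_zero_iff.mpr (neg_injective.comp hy)
  -- product of diagonal entries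
  have herase : ∀ j : Fin n, (univ.erase j) = Finset.Iio j ∪ Finset.Ioi j := by
    intro j
    ext k
    simp only [Finset.mem_erase, Finset.mem_univ, and_true, Finset.mem_union, Finset.mem_Iio,
      Finset.mem_Ioi]
    exact ne_iff_lt_or_gt
  have hdprod : ∏ j, d j =
      (∏ i : Fin n, ∏ j ∈ Ioi i, (y i - y j)) * (∏ i : Fin n, ∏ j ∈ Ioi i, (y j - y i)) := by
    have h1 : ∀ j : Fin n, d j =
        (∏ k ∈ Finset.Iio j, (y k - y j)) * (∏ k ∈ Finset.Ioi j, (y k - y j)) := by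
      intro j
      show (∏ k ∈ univ.erase j, (y k - y j)) = _
      rw [herase j, Finset.prod_union]
      simp [Finset.disjoint_left]
      intro a ha; exact le_of_lt ha
    rw [Finset.prod_congr rfl fun j _ => h1 j, Finset.prod_mul_distrib]
    congr 1
    refine Finset.prod_comm' ?_
    intro j k
    simp only [Finset.mem_univ, true_and, Finset.mem_Iio, Finset.mem_Ioi, and_true]
  -- determinant of F
  have hdetF : (Matrix.of fun i j => (p j).eval (x i)).det =
      (∏ i : Fin n, ∏ j ∈ Ioi i, (x j - x i)) * (∏ i : Fin n, ∏ j ∈ Ioi i, (y j - y i)) := by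
    have e1 : (Matrix.of fun i j => (p j).eval (x i)).det = (Matrix.vandermonde x).det * C.det := by
      rw [hF, Matrix.det_mul]
    have e2 : (Matrix.vandermonde fun i => -(y i)).det * C.det = ∏ j, d j := by
      rw [← Matrix.det_mul, ← hG, hGdiag, Matrix.det_diagonal]
    have e3 : C.det = (∏ j, d j) / (Matrix.vandermonde fun i => -(y i)).det := by
      field_simp [← e2]
      linarith [e2]
    rw [e1, e3, hdprod, Matrix.det_vandermonde, hVy]
    field_simp [hVy ▸ hVyne]
  -- relate A and F
  have hrowne : ∀ i, (∏ k, (x i + y k)) ≠ 0 := fun i =>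
    Finset.prod_ne_zero_iff.mpr fun k _ => hxy i k
  have hA : (Matrix.of fun i j : Fin n => (x i + y j)⁻¹) =
      Matrix.of fun i j => (∏ k, (x i + y k))⁻¹ * (Matrix.of fun i j => (p j).eval (x i)) i j := by
    ext i j
    rw [Matrix.of_apply, Matrix.of_apply, Matrix.of_apply, hpeval,
      ← Finset.mul_prod_erase univ _ (mem_univ j), mul_inv]
    rw [inv_mul_cancel_right₀ (Finset.prod_ne_zero_iff.mpr fun k hk => hxy i k)]
  rw [hA, Matrix.det_mul_column, hdetF]
  rw [Finset.prod_inv_distrib, inv_mul_eq_div]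

-- superfactorial
theorem aux_superfac (n : ℕ) :
    (∏ i : Fin n, ∏ j ∈ Finset.Ioi i, ((j : ℝ) - (i : ℝ))) =
      ∏ ℓ ∈ Finset.range n, (ℓ.factorial : ℝ) := by
  cases n with
  | zero => simp
  | succ m =>
    have h := Matrix.det_vandermonde_id_eq_superFactorial (R := ℝ) m
    rw [Matrix.det_vandermonde] at h
    rw [h, ← Nat.prod_range_succ_factorial m]
    push_cast
    rfl

-- sign bookkeeping
theorem aux_sign_x (n : ℕ) :
    (∏ i : Fin n, ∏ j ∈ Finset.Ioi i, (-(j : ℝ) - -(i : ℝ))) =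
      (-1 : ℝ) ^ (∑ i : Fin n, (Finset.Ioi i).card) *
        ∏ i : Fin n, ∏ j ∈ Finset.Ioi i, ((j : ℝ) - (i : ℝ)) := by
  rw [← Finset.prod_pow_eq_pow_sum, ← Finset.prod_mul_distrib]
  refine Finset.prod_congr rfl fun i _ => ?_
  rw [← Finset.prod_const, ← Finset.prod_mul_distrib]
  exact Finset.prod_congr rfl fun j _ => by ring

theorem aux_sign_d (n : ℕ) (ω : ℝ) :
    (∏ d ∈ Finset.Icc 1 (n-1), (ω^2 - (d:ℝ)^2) ^ (n - d)) =
      (-1 : ℝ) ^ (∑ d ∈ Finset.Icc 1 (n-1), (n - d)) *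
        ∏ d ∈ Finset.Icc 1 (n-1), ((d:ℝ)^2 - ω^2) ^ (n - d) := by
  rw [← Finset.prod_pow_eq_pow_sum, ← Finset.prod_mul_distrib]
  refine Finset.prod_congr rfl fun d _ => ?_
  rw [← mul_pow]
  congr 1
  ring

theorem aux_sign_eq (n : ℕ) :
    (∑ i : Fin n, (Finset.Ioi i).card) = ∑ d ∈ Finset.Icc 1 (n-1), (n - d) := by
  have h1 : (∑ i : Fin n, (Finset.Ioi i).card) = ∑ i ∈ Finset.range n, (n - 1 - i) := by
    rw [← Fin.sum_univ_eq_sum_range]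
    exact Finset.sum_congr rfl fun i _ => Fin.card_Ioi i
  have h2 : ∑ i ∈ Finset.range n, (n - 1 - i) = ∑ i ∈ Finset.range n, i :=
    Finset.sum_range_reflect id n
  have h3 : ∑ i ∈ Finset.range n, i = ∑ i ∈ Finset.Icc 1 (n-1), i := by
    refine (Finset.sum_subset ?_ ?_).symm
    · intro i hi
      simp only [Finset.mem_Icc] at hi
      simp only [Finset.mem_range]
      omega
    · intro i hi hni
      simp only [Finset.mem_range] at hi
      simp only [Finset.mem_Icc] at hni
      omega
  have h4 : ∑ i ∈ Finset.Icc 1 (n-1), i = ∑ d ∈ Finset.Icc 1 (n-1), (n - d) := by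
    refine Finset.sum_nbij' (fun d => n - d) (fun d => n - d) ?_ ?_ ?_ ?_ ?_ <;>
      intro a ha <;> simp only [Finset.mem_Icc] at * <;> omega
  rw [h1, h2, h3, h4]

theorem aux_denom (ω : ℝ) : ∀ n : ℕ,
    (∏ k ∈ Finset.range n, ∏ ℓ ∈ Finset.range n, ((ℓ:ℝ) - (k:ℝ) + ω)) =
      ω^n * ∏ d ∈ Finset.Icc 1 (n-1), (ω^2 - (d:ℝ)^2) ^ (n - d)
  | 0 => by simp
  | (n+1) => by
    have key : ∏ d ∈ Finset.Icc 1 n, (ω^2 - (d:ℝ)^2) ^ (n + 1 - d) =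
        (∏ d ∈ Finset.Icc 1 (n-1), (ω^2 - (d:ℝ)^2) ^ (n - d)) *
          ∏ d ∈ Finset.Icc 1 n, (ω^2 - (d:ℝ)^2) := by
      have h1 : ∀ d ∈ Finset.Icc 1 n, (ω^2 - (d:ℝ)^2) ^ (n + 1 - d) =
          (ω^2 - (d:ℝ)^2) ^ (n - d) * (ω^2 - (d:ℝ)^2) := by
        intro d hd
        simp only [Finset.mem_Icc] at hd
        rw [← pow_succ]
        congr 1
        omega
      rw [Finset.prod_congr rfl h1, Finset.prod_mul_distrib]
      congr 1
      refine (Finset.prod_subset ?_ ?_).symm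
      · exact Finset.Icc_subset_Icc_right (by omega)
      · intro d hd hnd
        simp only [Finset.mem_Icc] at hd hnd
        have : d = n := by omega
        subst this
        simp
    have pair : (∏ k ∈ Finset.range n, ((n:ℝ) - (k:ℝ) + ω)) *
        (∏ ℓ ∈ Finset.range n, ((ℓ:ℝ) - (n:ℝ) + ω)) =
        ∏ d ∈ Finset.Icc 1 n, (ω^2 - (d:ℝ)^2) := by
      rw [← Finset.prod_mul_distrib]
      refine Finset.prod_nbij' (fun k => n - k) (fun d => n - d) ?_ ?_ ?_ ?_ ?_
      · intro k hk
        simp only [Finset.mem_range] at hk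
        simp only [Finset.mem_Icc]
        omega
      · intro d hd
        simp only [Finset.mem_Icc] at hd
        simp only [Finset.mem_range]
        omega
      · intro k hk
        simp only [Finset.mem_range] at hk
        show n - (n - k) = k
        omega
      · intro d hd
        simp only [Finset.mem_Icc] at hd
        show n - (n - d) = d
        omega
      · intro k hk
        simp only [Finset.mem_range] at hk
        have : ((n - k : ℕ) : ℝ) = (n:ℝ) - (k:ℝ) := by
          push_cast [Nat.cast_sub (le_of_lt hk)]
          ring
        rw [this]
        ring
    calc ∏ k ∈ Finset.range (n+1), ∏ ℓ ∈ Finset.range (n+1), ((ℓ:ℝ) - (k:ℝ) + ω)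
        = (∏ k ∈ Finset.range n, ∏ ℓ ∈ Finset.range n, ((ℓ:ℝ) - (k:ℝ) + ω)) *
          ((∏ k ∈ Finset.range n, ((n:ℝ) - (k:ℝ) + ω)) *
           (∏ ℓ ∈ Finset.range n, ((ℓ:ℝ) - (n:ℝ) + ω)) * ω) := by
          rw [Finset.prod_range_succ]
          simp only [Finset.prod_range_succ, Finset.prod_mul_distrib]
          ring
      _ = ω^(n+1) * ∏ d ∈ Finset.Icc 1 ((n+1)-1), (ω^2 - (d:ℝ)^2) ^ ((n+1) - d) := by
          rw [aux_denom ω n, pair]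
          simp only [Nat.add_sub_cancel, key]
          ring

theorem toeplitz_det_formula (n : ℕ) (hn : 1 ≤ n) (ω : ℝ) (hω : ∀ m : ℤ, ω ≠ m) :
    (Matrix.of fun k ℓ : Fin n =>
        (-1 : ℝ) ^ ((ℓ : ℤ) - (k : ℤ)) * Real.sin (Real.pi * ω) /
          (Real.pi * ((((ℓ : ℤ) - (k : ℤ) : ℤ) : ℝ) + ω))).det
      = (Real.sin (Real.pi * ω) / (Real.pi * ω)) ^ n *
          (∏ ℓ ∈ Finset.range n, ((ℓ.factorial : ℝ)) ^ 2) /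
          ∏ k ∈ Finset.Icc 1 (n - 1), ((k : ℝ) ^ 2 - ω ^ 2) ^ (n - k) := by
  have hπ : Real.pi ≠ 0 := Real.pi_ne_zero
  have hω0 : ω ≠ 0 := by simpa using hω 0
  set s' : ℝ := Real.sin (Real.pi * ω) with hs'
  set x : Fin n → ℝ := fun k => -(k : ℝ) with hx
  set y : Fin n → ℝ := fun ℓ => (ℓ : ℝ) + ω with hy
  have hxy : ∀ k ℓ : Fin n, x k + y ℓ ≠ 0 := by
    intro k ℓ h
    apply hω ((k : ℤ) - (ℓ : ℤ))
    push_cast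
    simp only [hx, hy] at h
    linarith
  have hyinj : Function.Injective y := by
    intro a b h
    simp only [hy, add_left_inj, Nat.cast_inj] at h
    exact Fin.val_injective h
  -- rewrite the matrix
  have hpow : ∀ a b : Fin n, (-1 : ℝ) ^ ((a : ℤ) - (b : ℤ)) = (-1) ^ (a : ℕ) * (-1) ^ (b : ℕ) := by
    intro a b
    rw [zpow_sub₀ (by norm_num : (-1 : ℝ) ≠ 0), zpow_natCast, zpow_natCast, div_eq_mul_inv,
      ← inv_pow, inv_neg, inv_one]
  have hmat : (Matrix.of fun k ℓ : Fin n =>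
        (-1 : ℝ) ^ ((ℓ : ℤ) - (k : ℤ)) * s' / (Real.pi * ((((ℓ : ℤ) - (k : ℤ) : ℤ) : ℝ) + ω))) =
      Matrix.of (fun k ℓ : Fin n => (-1 : ℝ) ^ (k : ℕ) *
        (Matrix.of (fun k ℓ : Fin n => (-1 : ℝ) ^ (ℓ : ℕ) *
          ((s' / Real.pi) • Matrix.of (fun k ℓ : Fin n => (x k + y ℓ)⁻¹)) k ℓ)) k ℓ) := by
    ext k ℓ
    have hcast : ((((ℓ : ℤ) - (k : ℤ) : ℤ)) : ℝ) + ω = x k + y ℓ := by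
      simp only [hx, hy]
      push_cast
      ring
    simp only [Matrix.of_apply, Matrix.smul_apply, smul_eq_mul, hcast, hpow]
    rw [mul_comm ((-1:ℝ) ^ (ℓ:ℕ)) ((-1:ℝ) ^ (k:ℕ))]
    field_simp
  rw [hmat, Matrix.det_mul_column, Matrix.det_mul_row, Matrix.det_smul, cauchy_det x y hyinj hxy]
  -- signs cancel
  have hsigns : (∏ k : Fin n, (-1 : ℝ) ^ (k : ℕ)) * (∏ k : Fin n, (-1 : ℝ) ^ (k : ℕ)) = 1 := by
    rw [← Finset.prod_mul_distrib]
    refine Finset.prod_eq_one fun k _ => ?_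
    rw [← pow_add]
    exact Even.neg_one_pow ⟨(k : ℕ), rfl⟩
  -- the three product pieces
  set S : ℝ := ∏ ℓ ∈ Finset.range n, (ℓ.factorial : ℝ) with hS
  set E : ℕ := ∑ i : Fin n, (Finset.Ioi i).card with hE
  set D : ℝ := ∏ d ∈ Finset.Icc 1 (n-1), ((d:ℝ)^2 - ω^2) ^ (n - d) with hD
  have hXprod : (∏ i : Fin n, ∏ j ∈ Finset.Ioi i, (x j - x i)) = (-1 : ℝ) ^ E * S := by
    simp only [hx]
    rw [hE, hS]
    rw [aux_sign_x n, aux_superfac]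
  have hYprod : (∏ i : Fin n, ∏ j ∈ Finset.Ioi i, (y j - y i)) = S := by
    rw [hS, ← aux_superfac]
    exact Finset.prod_congr rfl fun i _ => Finset.prod_congr rfl fun j _ => by
      simp only [hy]; ring
  have hDen : (∏ i : Fin n, ∏ j : Fin n, (x i + y j)) = ω^n * ((-1 : ℝ) ^ E * D) := by
    have h1 : (∏ i : Fin n, ∏ j : Fin n, (x i + y j)) =
        ∏ k ∈ Finset.range n, ∏ ℓ ∈ Finset.range n, ((ℓ:ℝ) - (k:ℝ) + ω) := by
      have inner : ∀ k : ℕ, (∏ j : Fin n, ((j:ℝ) - (k:ℝ) + ω)) =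
          ∏ ℓ ∈ Finset.range n, ((ℓ:ℝ) - (k:ℝ) + ω) :=
        fun k => Fin.prod_univ_eq_prod_range (fun ℓ => ((ℓ:ℝ) - (k:ℝ) + ω)) n
      calc ∏ i : Fin n, ∏ j : Fin n, (x i + y j)
          = ∏ i : Fin n, ∏ j : Fin n, ((j:ℝ) - ((i:ℕ):ℝ) + ω) :=
            Finset.prod_congr rfl fun i _ => Finset.prod_congr rfl fun j _ => by
              simp only [hx, hy]; ring
        _ = ∏ i : Fin n, ∏ ℓ ∈ Finset.range n, ((ℓ:ℝ) - ((i:ℕ):ℝ) + ω) :=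
            Finset.prod_congr rfl fun i _ => inner i
        _ = ∏ k ∈ Finset.range n, ∏ ℓ ∈ Finset.range n, ((ℓ:ℝ) - (k:ℝ) + ω) :=
            Fin.prod_univ_eq_prod_range (fun k => ∏ ℓ ∈ Finset.range n, ((ℓ:ℝ) - (k:ℝ) + ω)) n
    rw [h1, aux_denom, aux_sign_d, ← aux_sign_eq, ← hE, ← hD]
  rw [hXprod, hYprod, hDen]
  -- nonvanishing
  have hDne : D ≠ 0 := by
    rw [hD]
    refine Finset.prod_ne_zero_iff.mpr fun d hd => pow_ne_zero _ ?_
    intro h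
    have h2 : ((d:ℝ) - ω) * ((d:ℝ) + ω) = 0 := by ring_nf; ring_nf at h; linarith
    rcases mul_eq_zero.mp h2 with h3 | h3
    · exact hω (d : ℤ) (by push_cast; linarith)
    · exact hω (-(d : ℤ)) (by push_cast; linarith)
  have hfact : (∏ ℓ ∈ Finset.range n, ((ℓ.factorial : ℝ)) ^ 2) = S ^ 2 := by
    rw [hS, ← Finset.prod_pow]
  rw [hfact]
  have hωn : ω ^ n ≠ 0 := pow_ne_zero _ hω0
  have hsgn : (-1 : ℝ) ^ E ≠ 0 := by
    intro h
    have := pow_ne_zero E (by norm_num : (-1:ℝ) ≠ 0)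
    exact this h
  rw [Fintype.card_fin, ← mul_assoc, hsigns, one_mul]
  rw [div_pow, div_pow, mul_pow]
  field_simp
end

section
/- Let n ≥ 1 be an integer and let ω ∈ ℝ \ ℤ. Consider the n×n Toeplitz matrix 𝔗 whose (k,ℓ) entry (0 ≤ k,ℓ ≤ n−1) is μ_{ℓ−k}, where μ_j = (−1)^j sin(πω)/(π(j+ω)) for j ∈ ℤ. Then det 𝔗 ≠ 0. -/
open Finset Polynomial

theorem toeplitz_det_ne_zero (n : ℕ) (hn : 1 ≤ n) (ω : ℝ) (hω : ∀ m : ℤ, ω ≠ m) :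
    (Matrix.of fun k ℓ : Fin n =>
        (-1 : ℝ) ^ ((ℓ : ℤ) - (k : ℤ)) * Real.sin (Real.pi * ω) /
          (Real.pi * ((((ℓ : ℤ) - (k : ℤ) : ℤ) : ℝ) + ω))).det ≠ 0 := by
  classical
  -- basic nonvanishing facts
  have hπ : (Real.pi : ℝ) ≠ 0 := Real.pi_ne_zero
  have hsin : Real.sin (Real.pi * ω) ≠ 0 := by
    intro h
    rcases Real.sin_eq_zero_iff.mp h with ⟨m, hm⟩
    exact hω m (mul_left_cancel₀ hπ (by linarith [mul_comm (m:ℝ) Real.pi]))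
  -- poles
  set s : Fin n → ℝ := fun m => (m : ℝ) + ω with hs
  have hsne : ∀ (m k : Fin n), s m - (k : ℝ) ≠ 0 := by
    intro m k h
    apply hω ((k : ℤ) - (m : ℤ))
    push_cast
    simp only [hs] at h
    linarith
  -- suppose det = 0
  intro hdet
  obtain ⟨v, hv0, hv⟩ := (Matrix.exists_mulVec_eq_zero_iff).mpr hdet
  set c : Fin n → ℝ := fun ℓ => (-1 : ℝ) ^ ((ℓ : ℤ)) * v ℓ with hc
  -- the key linear relations
  have key : ∀ k : Fin n, ∑ ℓ : Fin n, c ℓ / (s ℓ - (k : ℝ)) = 0 := by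
    intro k
    have hk := congrFun hv k
    have hterm : ∀ ℓ : Fin n,
        ((Matrix.of fun k ℓ : Fin n =>
          (-1 : ℝ) ^ ((ℓ : ℤ) - (k : ℤ)) * Real.sin (Real.pi * ω) /
            (Real.pi * ((((ℓ : ℤ) - (k : ℤ) : ℤ) : ℝ) + ω))) k ℓ) * v ℓ
        = (Real.sin (Real.pi * ω) / Real.pi) * (-1 : ℝ) ^ (-(k : ℤ)) *
            (c ℓ / (s ℓ - (k : ℝ))) := by
      intro ℓ
      have hne : Real.pi * ((((ℓ : ℤ) - (k : ℤ) : ℤ) : ℝ) + ω) ≠ 0 := by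
        apply mul_ne_zero hπ
        have := hsne ℓ k
        push_cast
        push_cast [hs] at this
        intro h; apply this; linarith
      have hz : (-1 : ℝ) ^ ((ℓ : ℤ) - (k : ℤ)) =
          (-1 : ℝ) ^ (-(k : ℤ)) * (-1 : ℝ) ^ ((ℓ : ℤ)) := by
        rw [← zpow_add₀ (by norm_num : (-1:ℝ) ≠ 0)]
        ring_nf
      have hd : s ℓ - (k : ℝ) = (((ℓ : ℤ) - (k : ℤ) : ℤ) : ℝ) + ω := by
        push_cast [hs]; ring
      simp only [Matrix.of_apply, hz, hc, hd]
      field_simp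
    rw [Matrix.mulVec, dotProduct] at hk
    simp only [hterm] at hk
    rw [← Finset.mul_sum] at hk
    rcases mul_eq_zero.mp hk with h | h
    · exact absurd h (by
        apply mul_ne_zero (div_ne_zero hsin hπ)
        exact zpow_ne_zero _ (by norm_num))
    · exact h
  -- the polynomial
  set p : ℝ[X] := ∑ ℓ : Fin n, C (c ℓ) * ∏ m ∈ univ.erase ℓ, (C (s m) - X) with hp
  have hevalk : ∀ k : Fin n, p.eval ((k : ℕ) : ℝ) = 0 := by
    intro k
    have : p.eval ((k : ℕ) : ℝ)
        = ∑ ℓ : Fin n, c ℓ * ∏ m ∈ univ.erase ℓ, (s m - (k : ℝ)) := by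
      simp [hp, eval_finset_sum, eval_prod]
    rw [this]
    have : ∀ ℓ : Fin n, c ℓ * ∏ m ∈ univ.erase ℓ, (s m - (k : ℝ))
        = (∏ m : Fin n, (s m - (k : ℝ))) * (c ℓ / (s ℓ - (k : ℝ))) := by
      intro ℓ
      rw [← Finset.mul_prod_erase univ _ (mem_univ ℓ)]
      field_simp [hsne ℓ k]
    simp only [this]
    rw [← Finset.mul_sum, key k, mul_zero]
  have hdeg : p.natDegree < n := by
    have : p.natDegree ≤ n - 1 := by
      apply Polynomial.natDegree_sum_le_of_forall_le
      intro ℓ _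
      calc (C (c ℓ) * ∏ m ∈ univ.erase ℓ, (C (s m) - X)).natDegree
          ≤ (C (c ℓ)).natDegree + (∏ m ∈ univ.erase ℓ, (C (s m) - X)).natDegree :=
            natDegree_mul_le
        _ ≤ 0 + ∑ m ∈ univ.erase ℓ, (C (s m) - X).natDegree := by
            gcongr
            · exact le_of_eq (natDegree_C _)
            · exact natDegree_prod_le _ _
        _ ≤ ∑ m ∈ univ.erase ℓ, 1 := by
            simp only [zero_add]
            gcongr with m _
            calc (C (s m) - X).natDegree ≤ max (C (s m)).natDegree X.natDegree :=
                natDegree_sub_le _ _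
              _ ≤ 1 := by simp
        _ = n - 1 := by simp [Finset.card_erase_of_mem]
    omega
  have hp0 : p = 0 := by
    apply Polynomial.eq_zero_of_natDegree_lt_card_of_eval_eq_zero p
      (f := fun k : Fin n => ((k : ℕ) : ℝ))
      (fun a b hab => Fin.ext (Nat.cast_injective hab))
      hevalk
    simpa using hdeg
  -- derive contradiction: evaluate at a pole where c ≠ 0
  obtain ⟨ℓ₀, hℓ₀⟩ : ∃ ℓ₀, c ℓ₀ ≠ 0 := by
    by_contra h
    push_neg at h
    apply hv0
    funext ℓ
    have := h ℓ
    simp only [hc] at this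
    rcases mul_eq_zero.mp this with h' | h'
    · exact absurd h' (zpow_ne_zero _ (by norm_num))
    · simpa using h'
  have := congrArg (Polynomial.eval (s ℓ₀)) hp0
  simp only [hp, eval_finset_sum, eval_mul, eval_C, eval_prod, eval_sub, eval_X,
    eval_zero] at this
  rw [Finset.sum_eq_single ℓ₀] at this
  · have hprod : (∏ m ∈ univ.erase ℓ₀, (s m - s ℓ₀)) ≠ 0 := by
      apply Finset.prod_ne_zero_iff.mpr
      intro m hm
      have hmℓ : m ≠ ℓ₀ := (Finset.mem_erase.mp hm).1
      simp only [hs]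
      intro h
      apply hmℓ
      apply Fin.ext
      have : ((m : ℕ) : ℝ) = ((ℓ₀ : ℕ) : ℝ) := by linarith
      exact_mod_cast this
    exact hℓ₀ (by
      rcases mul_eq_zero.mp this with h | h
      · exact h
      · exact absurd h hprod)
  · intro ℓ _ hne
    apply mul_eq_zero_of_right
    apply Finset.prod_eq_zero (Finset.mem_erase.mpr ⟨hne.symm, mem_univ ℓ₀⟩)
    simp
  · intro h; exact absurd (mem_univ ℓ₀) h
end

section
/- Let ω > 0 be a real number, n ∈ ℕ, and let k be an integer with 0 ≤ k ≤ n−1. Then ∫_{−π}^{π} S_n^ω(e^{iθ}) e^{i(ω−k)θ} dθ = 0; that is, S_n^ω is orthogonal to z^k with respect to the bilinear form ⟨f,g⟩_ω = (1/2π)∫_{−π}^{π} f(e^{iθ}) g(e^{−iθ}) e^{iωθ} dθ. -/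
open Finset Polynomial

lemma asc_eval_prod (ℓ : ℕ) (x : ℂ) :
    (ascPochhammer ℂ ℓ).eval x = ∏ i ∈ Finset.range ℓ, (x + i) := by
  induction ℓ with
  | zero => simp
  | succ m ih => rw [ascPochhammer_succ_eval, ih, Finset.prod_range_succ]

lemma exp_integral (a : ℝ) (ha : a ≠ 0) :
    (∫ θ in (-Real.pi)..Real.pi, Complex.exp (Complex.I * a * θ)) =
      2 * Real.sin (a * Real.pi) / a := by
  have hc : Complex.I * a ≠ 0 := by
    simp [Complex.I_ne_zero, Complex.ofReal_eq_zero, ha]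
  rw [integral_exp_mul_complex hc]
  have hs : ∀ z : ℂ, Complex.sin z = (Complex.exp (-z * Complex.I) - Complex.exp (z * Complex.I)) * Complex.I / 2 := fun z => rfl
  rw [Complex.ofReal_sin, hs]
  push_cast
  have hI := Complex.I_ne_zero
  have ha' : (a:ℂ) ≠ 0 := Complex.ofReal_ne_zero.2 ha
  field_simp
  ring_nf
  rw [Complex.I_sq]
  ring_nf

lemma findiff (n : ℕ) (p : ℂ[X]) (hp : p.degree < n) :
    ∑ ℓ ∈ Finset.range (n + 1), (-1 : ℂ) ^ ℓ * (n.choose ℓ) * p.eval (ℓ:ℂ) = 0 := by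
  induction n generalizing p with
  | zero =>
    have : p = 0 := by
      rw [← Polynomial.degree_eq_bot]
      exact Nat.WithBot.lt_zero_iff.mp (by exact_mod_cast hp)
    simp [this]
  | succ n ih =>
    rcases eq_or_ne p 0 with rfl | hp0
    · simp
    have hX1 : (X + 1 : ℂ[X]).natDegree = 1 := by
      simpa using Polynomial.natDegree_X_add_C (1:ℂ)
    have hcomp_lc : (p.comp (X + 1)).leadingCoeff = p.leadingCoeff := by
      rw [Polynomial.leadingCoeff_comp (by rw [hX1]; norm_num)]
      have : (X + 1 : ℂ[X]).leadingCoeff = 1 := by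
        simpa using Polynomial.leadingCoeff_X_add_C (1:ℂ)
      simp [this]
    have hcomp0 : p.comp (X + 1) ≠ 0 := by
      intro h
      apply hp0
      have := hcomp_lc
      rw [h] at this
      simp at this
      exact Polynomial.leadingCoeff_eq_zero.mp this.symm
    have hcomp_deg : (p.comp (X + 1)).degree = p.degree := by
      rw [Polynomial.degree_eq_natDegree hcomp0, Polynomial.degree_eq_natDegree hp0,
        Polynomial.natDegree_comp, hX1, mul_one]
    set q : ℂ[X] := p - p.comp (X + 1) with hq
    have hqdeg : q.degree < p.degree :=
      Polynomial.degree_sub_lt hcomp_deg.symm hp0 hcomp_lc.symm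
    have hpn : p.natDegree ≤ n := by
      have := (Polynomial.natDegree_lt_iff_degree_lt hp0).mpr (by exact_mod_cast hp)
      omega
    have hqlt : q.degree < (n : WithBot ℕ) := by
      refine hqdeg.trans_le ?_
      rw [Polynomial.degree_eq_natDegree hp0]
      exact_mod_cast hpn
    have hqeval : ∀ ℓ : ℕ, q.eval (ℓ:ℂ) = p.eval (ℓ:ℂ) - p.eval ((ℓ:ℂ) + 1) := by
      intro ℓ
      simp [hq, Polynomial.eval_comp]
    have key : ∑ ℓ ∈ Finset.range (n + 2), (-1 : ℂ) ^ ℓ * ((n+1).choose ℓ) * p.eval (ℓ:ℂ)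
        = ∑ ℓ ∈ Finset.range (n + 1), (-1 : ℂ) ^ ℓ * (n.choose ℓ) * q.eval (ℓ:ℂ) := by
      have h1 : ∑ ℓ ∈ Finset.range (n + 2), (-1 : ℂ) ^ ℓ * ((n+1).choose ℓ) * p.eval (ℓ:ℂ)
          = (∑ ℓ ∈ Finset.range (n + 1), (-1 : ℂ) ^ (ℓ+1) * ((n+1).choose (ℓ+1)) * p.eval ((ℓ:ℂ)+1))
            + p.eval 0 := by
        rw [Finset.sum_range_succ' (fun ℓ => (-1 : ℂ) ^ ℓ * ((n+1).choose ℓ) * p.eval (ℓ:ℂ)) (n+1)]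
        simp
      have h2 : ∑ ℓ ∈ Finset.range (n + 1), (-1 : ℂ) ^ ℓ * ((n).choose (ℓ+1)) * p.eval ((ℓ:ℂ)+1)
          = p.eval 0 - ∑ ℓ ∈ Finset.range (n + 1), (-1 : ℂ) ^ ℓ * ((n).choose ℓ) * p.eval (ℓ:ℂ) := by
        have h0 := Finset.sum_range_succ' (fun ℓ => (-1 : ℂ) ^ ℓ * ((n).choose ℓ) * p.eval (ℓ:ℂ)) (n+1)
        rw [Finset.sum_range_succ (fun ℓ => (-1 : ℂ) ^ ℓ * ((n).choose ℓ) * p.eval (ℓ:ℂ)) (n+1)] at h0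
        simp only [Nat.choose_succ_self, Nat.cast_zero, zero_mul, mul_zero, add_zero] at h0
        have h3 : ∑ ℓ ∈ Finset.range (n + 1), (-1:ℂ)^(ℓ+1) * ((n).choose (ℓ+1)) * p.eval ((ℓ:ℂ)+1)
            = - ∑ ℓ ∈ Finset.range (n + 1), (-1 : ℂ) ^ ℓ * ((n).choose (ℓ+1)) * p.eval ((ℓ:ℂ)+1) := by
          rw [← Finset.sum_neg_distrib]
          exact Finset.sum_congr rfl (fun ℓ _ => by push_cast; ring)
        push_cast at h0
        rw [h3] at h0
        norm_num at h0
        linear_combination h0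
      rw [h1]
      have h5 : ∑ ℓ ∈ Finset.range (n + 1), (-1:ℂ)^(ℓ+1) * (((n+1)).choose (ℓ+1)) * p.eval ((ℓ:ℂ)+1)
          = (- ∑ ℓ ∈ Finset.range (n + 1), (-1 : ℂ) ^ ℓ * ((n).choose ℓ) * p.eval ((ℓ:ℂ)+1))
            + (- ∑ ℓ ∈ Finset.range (n + 1), (-1 : ℂ) ^ ℓ * ((n).choose (ℓ+1)) * p.eval ((ℓ:ℂ)+1)) := by
        rw [← Finset.sum_neg_distrib, ← Finset.sum_neg_distrib, ← Finset.sum_add_distrib]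
        refine Finset.sum_congr rfl (fun ℓ _ => ?_)
        rw [Nat.choose_succ_succ]
        push_cast
        ring
      rw [h5, h2]
      have h6 : ∑ ℓ ∈ Finset.range (n + 1), (-1 : ℂ) ^ ℓ * (n.choose ℓ) * q.eval (ℓ:ℂ)
          = ∑ ℓ ∈ Finset.range (n + 1), ((-1 : ℂ) ^ ℓ * (n.choose ℓ) * p.eval (ℓ:ℂ)
              - (-1 : ℂ) ^ ℓ * (n.choose ℓ) * p.eval ((ℓ:ℂ)+1)) := by
        exact Finset.sum_congr rfl (fun ℓ _ => by rw [hqeval ℓ]; ring)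
      rw [h6, Finset.sum_sub_distrib]
      ring
    rw [key]
    exact ih q hqlt

lemma prod_neg_eq (ℓ : ℕ) (f : ℕ → ℂ) :
    ∏ i ∈ Finset.range ℓ, (-(f i)) = (-1)^ℓ * ∏ i ∈ Finset.range ℓ, f i := by
  have : ∀ i ∈ Finset.range ℓ, -(f i) = (-1) * f i := fun i _ => by ring
  rw [Finset.prod_congr rfl this, Finset.prod_mul_distrib, Finset.prod_const, Finset.card_range]

lemma key_prod (x : ℂ) (n ℓ : ℕ) (hℓ : ℓ ≤ n) :
    (∏ i ∈ Finset.range ℓ, (-x + i)) * (∏ j ∈ Finset.range n, (x + j + 1))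
      = (∏ i ∈ Finset.range ℓ, (-(n:ℂ) - x + i)) *
        (∏ t ∈ Finset.range n, (x + n - ℓ - t)) := by
  obtain ⟨m, rfl⟩ : ∃ m, n = m + ℓ := ⟨n - ℓ, by omega⟩
  have hA : (∏ i ∈ Finset.range ℓ, (-x + i)) = ∏ i ∈ Finset.range ℓ, (-(x - i)) :=
    Finset.prod_congr rfl fun i _ => by ring
  have hB : (∏ j ∈ Finset.range (m + ℓ), (x + j + 1))
      = (∏ j ∈ Finset.range m, (x + j + 1)) * ∏ j ∈ Finset.range ℓ, (x + m + j + 1) := by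
    rw [Finset.prod_range_add]
    congr 1
    exact Finset.prod_congr rfl fun j _ => by push_cast; ring
  have hC : (∏ i ∈ Finset.range ℓ, (-((m+ℓ:ℕ):ℂ) - x + i))
      = ∏ i ∈ Finset.range ℓ, (-(x + m + i + 1)) := by
    rw [← Finset.prod_range_reflect (fun i => (-((m+ℓ:ℕ):ℂ) - x + i)) ℓ]
    refine Finset.prod_congr rfl fun j hj => ?_
    rw [Finset.mem_range] at hj
    have : ((ℓ - 1 - j : ℕ) : ℂ) = (ℓ : ℂ) - 1 - j := by
      have h1 : ℓ - 1 - j = ℓ - (1 + j) := by omega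
      rw [h1, Nat.cast_sub (by omega : 1 + j ≤ ℓ)]
      push_cast; ring
    rw [this]
    push_cast
    ring
  have hD : (∏ t ∈ Finset.range (m + ℓ), (x + ((m+ℓ:ℕ):ℂ) - ℓ - t))
      = (∏ j ∈ Finset.range m, (x + j + 1)) * ∏ t ∈ Finset.range ℓ, (x - t) := by
    rw [Finset.prod_range_add]
    congr 1
    · rw [← Finset.prod_range_reflect (fun j => (x + (j:ℂ) + 1)) m]
      refine Finset.prod_congr rfl fun t ht => ?_
      rw [Finset.mem_range] at ht
      have : ((m - 1 - t : ℕ) : ℂ) = (m : ℂ) - 1 - t := by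
        have h1 : m - 1 - t = m - (1 + t) := by omega
        rw [h1, Nat.cast_sub (by omega : 1 + t ≤ m)]
        push_cast; ring
      rw [this]
      push_cast
      ring
    · exact Finset.prod_congr rfl fun t _ => by push_cast; ring
  rw [hA, hB, hC, hD, prod_neg_eq, prod_neg_eq]
  ring

/-- The monic skyburst polynomial
`S_n^ω(z) = Σ_{ℓ=0}^n binom(n,ℓ) · (−ω)_ℓ/(−n−ω)_ℓ · z^{n−ℓ}`,
where `(a)_ℓ` is the Pochhammer (rising factorial) symbol. -/
noncomputable def skyburst (n : ℕ) (ω : ℝ) (z : ℂ) : ℂ :=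
  ∑ ℓ ∈ Finset.range (n + 1),
    (n.choose ℓ : ℂ) *
      ((ascPochhammer ℂ ℓ).eval (-(ω : ℂ)) / (ascPochhammer ℂ ℓ).eval (-(n : ℂ) - (ω : ℂ))) *
      z ^ (n - ℓ)

theorem skyburst_orthogonal (ω : ℝ) (hω : 0 < ω) (n : ℕ) (k : ℕ) (hk : k < n) :
    ∫ θ in (-Real.pi)..Real.pi,
        skyburst n ω (Complex.exp (Complex.I * (θ : ℂ))) *
          Complex.exp (Complex.I * ((ω : ℂ) - (k : ℂ)) * (θ : ℂ)) = 0 := by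
  set P : ℕ → ℂ := fun ℓ => (ascPochhammer ℂ ℓ).eval (-(ω : ℂ)) with hPdef
  set Q : ℕ → ℂ := fun ℓ => (ascPochhammer ℂ ℓ).eval (-(n : ℂ) - (ω : ℂ)) with hQdef
  set c : ℕ → ℂ := fun ℓ => (n.choose ℓ : ℂ) * (P ℓ / Q ℓ) with hcdef
  set a : ℕ → ℝ := fun ℓ => ((n - ℓ : ℕ) : ℝ) + ω - k with hadef
  -- pointwise rewriting of the integrand
  have hpt : ∀ θ : ℝ,
      skyburst n ω (Complex.exp (Complex.I * (θ : ℂ))) *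
          Complex.exp (Complex.I * ((ω : ℂ) - (k : ℂ)) * (θ : ℂ))
        = ∑ ℓ ∈ Finset.range (n + 1), c ℓ * Complex.exp (Complex.I * (a ℓ : ℝ) * θ) := by
    intro θ
    rw [skyburst, Finset.sum_mul]
    refine Finset.sum_congr rfl fun ℓ hℓ => ?_
    rw [← Complex.exp_nat_mul, mul_assoc, ← Complex.exp_add]
    congr 1
    simp only [hadef, Complex.ofReal_sub, Complex.ofReal_add, Complex.ofReal_natCast]
    ring
  have hInt : ∀ ℓ, IntervalIntegrable (fun θ : ℝ => c ℓ * Complex.exp (Complex.I * (a ℓ : ℝ) * θ))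
      MeasureTheory.volume (-Real.pi) Real.pi := by
    intro ℓ
    apply Continuous.intervalIntegrable
    exact continuous_const.mul (Complex.continuous_exp.comp (by fun_prop))
  calc ∫ θ in (-Real.pi)..Real.pi,
        skyburst n ω (Complex.exp (Complex.I * (θ : ℂ))) *
          Complex.exp (Complex.I * ((ω : ℂ) - (k : ℂ)) * (θ : ℂ))
      = ∫ θ in (-Real.pi)..Real.pi,
          ∑ ℓ ∈ Finset.range (n + 1), c ℓ * Complex.exp (Complex.I * (a ℓ : ℝ) * θ) := by
        simp only [hpt]
    _ = ∑ ℓ ∈ Finset.range (n + 1), ∫ θ in (-Real.pi)..Real.pi,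
          c ℓ * Complex.exp (Complex.I * (a ℓ : ℝ) * θ) := by
        exact intervalIntegral.integral_finset_sum (fun ℓ _ => hInt ℓ)
    _ = ∑ ℓ ∈ Finset.range (n + 1),
          c ℓ * ∫ θ in (-Real.pi)..Real.pi, Complex.exp (Complex.I * (a ℓ : ℝ) * θ) := by
        exact Finset.sum_congr rfl fun ℓ _ => intervalIntegral.integral_const_mul _ _
    _ = 0 := by
        -- basic nonvanishing facts
        have hQprod : ∀ ℓ, Q ℓ = ∏ i ∈ Finset.range ℓ, (-(n : ℂ) - (ω : ℂ) + i) := by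
          intro ℓ; rw [hQdef]; exact asc_eval_prod ℓ _
        have hPprod : ∀ ℓ, P ℓ = ∏ i ∈ Finset.range ℓ, (-(ω : ℂ) + i) := by
          intro ℓ; rw [hPdef]; exact asc_eval_prod ℓ _
        have hQ0 : ∀ ℓ ∈ Finset.range (n + 1), Q ℓ ≠ 0 := by
          intro ℓ hℓ
          rw [Finset.mem_range] at hℓ
          rw [hQprod]
          refine Finset.prod_ne_zero_iff.mpr fun i hi => ?_
          rw [Finset.mem_range] at hi
          have h1 : (-(n : ℂ) - (ω : ℂ) + i) = ((-(n : ℝ) - ω + i : ℝ) : ℂ) := by push_cast; ring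
          rw [h1, Complex.ofReal_ne_zero]
          have h2 : (i : ℝ) < n := by exact_mod_cast (by omega : i < n)
          nlinarith
        by_cases hA : ∀ ℓ ∈ Finset.range (n + 1), a ℓ ≠ 0
        · -- no integer resonance
          have hD0 : (∏ j ∈ Finset.range n, ((ω:ℂ) + j + 1)) ≠ 0 := by
            refine Finset.prod_ne_zero_iff.mpr fun j hj => ?_
            have h1 : ((ω:ℂ) + j + 1) = ((ω + j + 1 : ℝ) : ℂ) := by push_cast; ring
            rw [h1, Complex.ofReal_ne_zero]
            positivity
          set p : ℂ[X] := ∏ t ∈ (Finset.range n).erase k, (Polynomial.C ((ω:ℂ) + n - t) - X)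
            with hp
          have hpdeg : p.degree < (n : WithBot ℕ) := by
            rw [hp, Polynomial.degree_prod]
            have hone : ∀ t ∈ (Finset.range n).erase k,
                (Polynomial.C ((ω:ℂ) + n - t) - X).degree = 1 := by
              intro t _
              have h2 : Polynomial.C ((ω:ℂ) + n - t) - X
                  = -(X - Polynomial.C ((ω:ℂ) + n - t)) := by ring
              rw [h2, Polynomial.degree_neg, Polynomial.degree_X_sub_C]
            rw [Finset.sum_congr rfl hone, Finset.sum_const,
              Finset.card_erase_of_mem (Finset.mem_range.mpr hk), Finset.card_range]
            simp only [nsmul_eq_mul, mul_one]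
            exact_mod_cast (by omega : n - 1 < n)
          set e : ℂ := (-1:ℂ)^((n:ℤ) - k) with he
          set sn : ℂ := ((Real.sin (ω * Real.pi) : ℝ) : ℂ) with hsn
          have hterm : ∀ ℓ ∈ Finset.range (n+1),
              c ℓ * ∫ θ in (-Real.pi)..Real.pi, Complex.exp (Complex.I * (a ℓ : ℝ) * θ)
              = (2 * sn * e) *
                ((-1:ℂ)^ℓ * (n.choose ℓ : ℂ) * p.eval (ℓ:ℂ)
                  / (∏ j ∈ Finset.range n, ((ω:ℂ) + j + 1))) := by
            intro ℓ hℓ'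
            have hℓn : ℓ ≤ n := by
              rw [Finset.mem_range] at hℓ'; omega
            have haR : a ℓ ≠ 0 := hA ℓ hℓ'
            have haC : ((a ℓ : ℝ) : ℂ) ≠ 0 := Complex.ofReal_ne_zero.mpr haR
            rw [exp_integral _ haR]
            set mz : ℤ := (n:ℤ) - ℓ - k with hmz
            have hsin : Real.sin (a ℓ * Real.pi)
                = (-1:ℝ)^mz * Real.sin (ω * Real.pi) := by
              have h1 : a ℓ * Real.pi = ω * Real.pi + (mz:ℝ) * Real.pi := by
                rw [hadef, hmz]; simp only; push_cast [Nat.cast_sub hℓn]; ring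
              rw [h1, Real.sin_add_int_mul_pi]
            have hz : ((-1:ℂ))^mz = e * (-1:ℂ)^ℓ := by
              rw [he, hmz, show (n:ℤ) - ℓ - k = ((n:ℤ) - k) + (-(ℓ:ℤ)) by ring,
                zpow_add₀ (by norm_num : (-1:ℂ) ≠ 0)]
              congr 1
              rw [zpow_neg, zpow_natCast, ← inv_pow]
              norm_num
            have hsinC : ((Real.sin (a ℓ * Real.pi) : ℝ) : ℂ) = e * (-1:ℂ)^ℓ * sn := by
              rw [hsin, hsn, ← hz]
              push_cast [Complex.ofReal_zpow]
              norm_num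
            have hfrac : P ℓ * (∏ j ∈ Finset.range n, ((ω:ℂ) + j + 1))
                = p.eval (ℓ:ℂ) * (Q ℓ * ((a ℓ : ℝ) : ℂ)) := by
              have hmul : ((a ℓ : ℝ) : ℂ) * p.eval (ℓ:ℂ)
                  = ∏ t ∈ Finset.range n, ((ω:ℂ) + n - ℓ - t) := by
                rw [hp, Polynomial.eval_prod]
                have he' : ∀ t ∈ (Finset.range n).erase k,
                    (Polynomial.C ((ω:ℂ) + n - t) - X).eval (ℓ:ℂ)
                    = (ω:ℂ) + n - ℓ - t := by
                  intro t _; simp; ring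
                rw [Finset.prod_congr rfl he',
                  ← Finset.mul_prod_erase (Finset.range n)
                    (fun t => (ω:ℂ) + (n:ℂ) - ℓ - t) (Finset.mem_range.mpr hk)]
                congr 1
                rw [hadef]; simp only; push_cast [Nat.cast_sub hℓn]; ring
              rw [hPprod, hQprod, key_prod (ω:ℂ) n ℓ hℓn, ← hmul]
              ring
            rw [hcdef]
            simp only
            rw [hsinC]
            field_simp [hQ0 ℓ hℓ', haC]
            linear_combination ((n.choose ℓ : ℂ) * e * sn) * hfrac
          rw [Finset.sum_congr rfl hterm, ← Finset.mul_sum, ← Finset.sum_div,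
            findiff n p hpdeg, zero_div, mul_zero]
        · -- resonance case : ω is a suitable integer
          push_neg at hA
          obtain ⟨ℓ₀, hℓ₀, ha₀⟩ := hA
          rw [Finset.mem_range] at hℓ₀
          -- ω equals the natural number k - (n - ℓ₀)
          set j₀ : ℕ := n - ℓ₀ with hj₀
          have hωval : ω = (k : ℝ) - j₀ := by
            rw [hadef] at ha₀; simp only at ha₀; linarith
          have hj₀k : j₀ < k := by
            by_contra h
            push_neg at h
            have : (k : ℝ) ≤ j₀ := by exact_mod_cast h
            linarith
          set m : ℕ := k - j₀ with hm
          have hmω : (m : ℝ) = ω := by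
            rw [hωval, hm]
            push_cast [Nat.cast_sub hj₀k.le]
            ring
          refine Finset.sum_eq_zero fun ℓ hℓ => ?_
          rw [Finset.mem_range] at hℓ
          by_cases haℓ : a ℓ = 0
          · -- the coefficient vanishes
            have hωℓ : ω = (k : ℝ) - ((n - ℓ : ℕ) : ℝ) := by
              rw [hadef] at haℓ; simp only at haℓ; linarith
            have hnat : (n - ℓ : ℕ) + m = k := by
              have : ((n - ℓ : ℕ) : ℝ) + m = k := by rw [hmω, hωℓ]; ring
              exact_mod_cast this
            have hmℓ : m < ℓ := by omega
            have hPz : P ℓ = 0 := by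
              rw [hPprod]
              refine Finset.prod_eq_zero (Finset.mem_range.mpr hmℓ) ?_
              have : ((m : ℝ) : ℂ) = (ω : ℂ) := by exact_mod_cast congrArg (fun x : ℝ => (x : ℂ)) hmω
              push_cast at this ⊢
              rw [this]
              ring
            simp [hcdef, hPz]
          · -- the sine factor vanishes
            rw [exp_integral _ haℓ]
            have hsin : Real.sin (a ℓ * Real.pi) = 0 := by
              have : a ℓ * Real.pi = (((n - ℓ : ℕ) : ℤ) + m - k) * Real.pi := by
                rw [hadef]
                simp only
                rw [← hmω]
                push_cast
                ring
              rw [this]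
              exact_mod_cast Real.sin_int_mul_pi _
            rw [hsin]
            simp
end

section
/- Let ω > 0 be a real number and n ≥ 1 an integer. Then for every z ∈ ℂ, S_n^ω(z) = z·S_{n−1}^ω(z) + (ω²/((ω+n−1)(ω+n)))·S_{n−1}^{ω−1}(z). -/
open Finset Polynomial

lemma poch_succ_eval' (k : ℕ) (x : ℂ) :
    (ascPochhammer ℂ (k+1)).eval x = x * (ascPochhammer ℂ k).eval (x+1) := by
  rw [ascPochhammer_succ_left]
  simp [eval_comp]

lemma poch_real_ne_zero (k : ℕ) (x : ℝ) (h : ∀ i : ℕ, i < k → x + i ≠ 0) :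
    (ascPochhammer ℂ k).eval (x : ℂ) ≠ 0 := by
  induction k with
  | zero => simp
  | succ k ih =>
    rw [ascPochhammer_succ_eval]
    refine mul_ne_zero (ih fun i hi => h i (by omega)) ?_
    have : ((x : ℂ) + k) = ((x + k : ℝ) : ℂ) := by push_cast; ring
    rw [this]
    exact_mod_cast h k (by omega)

lemma coeff_key (ω : ℝ) (hω : 0 < ω) (m k : ℕ) (hk : k ≤ m) :
    (((m+1).choose (k+1) : ℕ) : ℂ) *
      ((ascPochhammer ℂ (k+1)).eval (-(ω:ℂ)) /
        (ascPochhammer ℂ (k+1)).eval (-((m:ℂ)+1) - ω)) =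
    ((m.choose (k+1) : ℕ) : ℂ) *
      ((ascPochhammer ℂ (k+1)).eval (-(ω:ℂ)) /
        (ascPochhammer ℂ (k+1)).eval (-(m:ℂ) - ω)) +
    ((ω:ℂ)^2 / (((ω:ℂ) + (m:ℂ)) * ((ω:ℂ) + (m:ℂ) + 1))) *
      (((m.choose k : ℕ) : ℂ) *
        ((ascPochhammer ℂ k).eval (1 - (ω:ℂ)) /
          (ascPochhammer ℂ k).eval (1 - (m:ℂ) - ω))) := by
  have hA1 : (ascPochhammer ℂ (k+1)).eval (-(ω:ℂ)) =
      -(ω:ℂ) * (ascPochhammer ℂ k).eval (1 - (ω:ℂ)) := by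
    rw [poch_succ_eval']; ring_nf
  have hA2 : (ascPochhammer ℂ (k+1)).eval (-((m:ℂ)+1) - ω) =
      (-((m:ℂ)+1) - ω) * (ascPochhammer ℂ k).eval (-(m:ℂ) - ω) := by
    rw [poch_succ_eval']; ring_nf
  have hA3 : (ascPochhammer ℂ (k+1)).eval (-(m:ℂ) - ω) =
      (-(m:ℂ) - ω) * (ascPochhammer ℂ k).eval (1 - (m:ℂ) - ω) := by
    rw [poch_succ_eval']; ring_nf
  have hA4 : (ascPochhammer ℂ (k+1)).eval (-(m:ℂ) - ω) =
      (ascPochhammer ℂ k).eval (-(m:ℂ) - ω) * (-(m:ℂ) - ω + k) := by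
    rw [ascPochhammer_succ_eval]
  set A := (ascPochhammer ℂ k).eval (1 - (ω:ℂ)) with hA
  set B := (ascPochhammer ℂ k).eval (1 - (m:ℂ) - ω) with hB
  set C := (ascPochhammer ℂ k).eval (-(m:ℂ) - ω) with hC
  have hBC : (-(m:ℂ) - ω) * B = C * (-(m:ℂ) - ω + k) := by rw [← hA3, hA4]
  have hBne : B ≠ 0 := by
    have : (1 - (m:ℂ) - ω) = ((1 - m - ω : ℝ) : ℂ) := by push_cast; ring
    rw [hB, this]
    refine poch_real_ne_zero k _ fun i hi => ?_
    have h1 : (i : ℝ) + 1 ≤ m := by exact_mod_cast (show i + 1 ≤ m by omega)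
    have h2 : (1 : ℝ) - m - ω + i < 0 := by linarith
    exact h2.ne
  have hCne : C ≠ 0 := by
    have : (-(m:ℂ) - ω) = ((-m - ω : ℝ) : ℂ) := by push_cast; ring
    rw [hC, this]
    refine poch_real_ne_zero k _ fun i hi => ?_
    have h1 : (i : ℝ) ≤ m := by exact_mod_cast by omega
    nlinarith
  have hd1 : (-((m:ℂ)+1) - ω) ≠ 0 := by
    have : (-((m:ℂ)+1) - ω) = ((-(m+1) - ω : ℝ) : ℂ) := by push_cast; ring
    rw [this, Complex.ofReal_ne_zero]
    have : (0:ℝ) ≤ m := Nat.cast_nonneg m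
    nlinarith
  have hd2 : (-(m:ℂ) - ω) ≠ 0 := by
    have : (-(m:ℂ) - ω) = ((-m - ω : ℝ) : ℂ) := by push_cast; ring
    rw [this, Complex.ofReal_ne_zero]
    have : (0:ℝ) ≤ m := Nat.cast_nonneg m
    nlinarith
  have hd3 : ((ω:ℂ) + m) ≠ 0 := by
    have : ((ω:ℂ) + m) = ((ω + m : ℝ) : ℂ) := by push_cast; ring
    rw [this, Complex.ofReal_ne_zero]
    have : (0:ℝ) ≤ m := Nat.cast_nonneg m
    nlinarith
  have hd4 : ((ω:ℂ) + m + 1) ≠ 0 := by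
    have : ((ω:ℂ) + m + 1) = ((ω + m + 1 : ℝ) : ℂ) := by push_cast; ring
    rw [this, Complex.ofReal_ne_zero]
    have : (0:ℝ) ≤ m := Nat.cast_nonneg m
    nlinarith
  have hP : (((m+1).choose (k+1) : ℕ) : ℂ) =
      ((m.choose k : ℕ) : ℂ) + ((m.choose (k+1) : ℕ) : ℂ) := by
    rw [← Nat.cast_add, ← Nat.choose_succ_succ]
  have hS : ((k:ℂ) + 1) * (((m+1).choose (k+1) : ℕ) : ℂ) =
      ((m:ℂ) + 1) * ((m.choose k : ℕ) : ℂ) := by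
    have := Nat.add_one_mul_choose_eq m k
    have h2 : ((m+1) * (m.choose k) : ℕ) = (((m+1).choose (k+1)) * (k+1) : ℕ) := by
      simpa [Nat.succ_eq_add_one] using this
    have := congrArg (Nat.cast : ℕ → ℂ) h2
    push_cast at this
    linear_combination -this
  rw [hA1, hA2, hA3]
  have hd1' : (-1 + -(m:ℂ) - ω) * C ≠ 0 := by
    refine mul_ne_zero ?_ hCne
    have h : (-1 + -(m:ℂ) - ω) = (-((m:ℂ)+1) - ω) := by ring
    rw [h]; exact hd1
  field_simp
  linear_combination (-((((m+1).choose (k+1) : ℕ) : ℂ) *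
      (A * (ω:ℂ) * ((ω:ℂ)+(m:ℂ)) * ((ω:ℂ)+(m:ℂ)+1)))) * hBC -
    (C * (A * (ω:ℂ) * ((ω:ℂ)+(m:ℂ)) * ((ω:ℂ)+(m:ℂ)+1))) * hS +
    ((1+(m:ℂ)+(ω:ℂ)) * C * (A * (ω:ℂ) * ((ω:ℂ)+(m:ℂ)) * ((ω:ℂ)+(m:ℂ)+1))) * hP

theorem skyburst_mixed_recurrence (ω : ℝ) (hω : 0 < ω) (n : ℕ) (hn : 1 ≤ n) (z : ℂ) :
    skyburst n ω z =
      z * skyburst (n - 1) ω z +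
        ((ω : ℂ) ^ 2 / (((ω : ℂ) + (n : ℂ) - 1) * ((ω : ℂ) + (n : ℂ)))) *
          skyburst (n - 1) (ω - 1) z := by
  obtain ⟨m, rfl⟩ : ∃ m, n = m + 1 := ⟨n - 1, (Nat.succ_pred_eq_of_pos hn).symm⟩
  simp only [Nat.add_sub_cancel, skyburst]
  push_cast
  rw [Finset.mul_sum, Finset.mul_sum]
  have hz : ∀ ℓ ∈ Finset.range (m+1),
      z * ((m.choose ℓ : ℂ) *
        ((ascPochhammer ℂ ℓ).eval (-(ω:ℂ)) / (ascPochhammer ℂ ℓ).eval (-(m:ℂ) - ω)) *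
        z ^ (m - ℓ))
      = (m.choose ℓ : ℂ) *
        ((ascPochhammer ℂ ℓ).eval (-(ω:ℂ)) / (ascPochhammer ℂ ℓ).eval (-(m:ℂ) - ω)) *
        z ^ (m + 1 - ℓ) := by
    intro ℓ hℓ
    rw [Finset.mem_range] at hℓ
    rw [show m + 1 - ℓ = (m - ℓ) + 1 by omega, pow_succ]
    ring
  rw [Finset.sum_congr rfl hz]
  have hext : ∑ ℓ ∈ Finset.range (m+1+1), ((m.choose ℓ : ℂ) *
        ((ascPochhammer ℂ ℓ).eval (-(ω:ℂ)) / (ascPochhammer ℂ ℓ).eval (-(m:ℂ) - ω)) *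
        z ^ (m + 1 - ℓ))
      = ∑ ℓ ∈ Finset.range (m+1), ((m.choose ℓ : ℂ) *
        ((ascPochhammer ℂ ℓ).eval (-(ω:ℂ)) / (ascPochhammer ℂ ℓ).eval (-(m:ℂ) - ω)) *
        z ^ (m + 1 - ℓ)) := by
    rw [Finset.sum_range_succ]
    simp [Nat.choose_succ_self]
  rw [← hext, Finset.sum_range_succ' _ (m+1), Finset.sum_range_succ' _ (m+1)]
  simp only [Nat.succ_sub_succ, Nat.choose_zero_right, ascPochhammer_zero, Polynomial.eval_one,
    Nat.sub_zero, Nat.cast_one, one_mul, div_one, div_self, mul_one]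
  conv_rhs => rw [add_right_comm]
  rw [← Finset.sum_add_distrib]
  congr 1
  refine Finset.sum_congr rfl fun k hk => ?_
  rw [Finset.mem_range] at hk
  rw [show (-((ω:ℂ) - 1)) = 1 - (ω:ℂ) by ring,
    show -(m:ℂ) - ((ω:ℂ) - 1) = 1 - (m:ℂ) - (ω:ℂ) by ring]
  linear_combination z ^ (m - k) * coeff_key ω hω m k (by omega)
end

section
/- For all natural numbers m and n and every z ∈ ℂ, z^m · S_n^m(z) = z^n · S_m^n(z); equivalently, z^{−n} S_n^m(z) = z^{−m} S_m^n(z) for z ≠ 0. -/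
open Finset Polynomial

lemma choose_step (m k : ℕ) :
    (m.choose k : ℂ) * ((m : ℂ) - k) = ((k : ℂ) + 1) * m.choose (k + 1) := by
  rcases lt_or_ge k m with h | h
  · have hnat : m.choose (k + 1) * (k + 1) = m.choose k * (m - k) :=
      Nat.choose_succ_right_eq m k
    have := congrArg (fun x : ℕ => (x : ℂ)) hnat
    push_cast [Nat.cast_sub h.le] at this
    linear_combination -this
  · rcases eq_or_lt_of_le h with h' | h'
    · subst h'
      simp [Nat.choose_succ_self]
    · rw [Nat.choose_eq_zero_of_lt h', Nat.choose_eq_zero_of_lt (by omega)]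
      simp

lemma asc_neg_nat (m ℓ : ℕ) :
    (ascPochhammer ℂ ℓ).eval (-(m : ℂ)) = (-1) ^ ℓ * ℓ.factorial * m.choose ℓ := by
  induction ℓ with
  | zero => simp
  | succ k ih =>
    rw [ascPochhammer_succ_right]
    simp only [Polynomial.eval_mul, Polynomial.eval_add, Polynomial.eval_X,
      Polynomial.eval_natCast, ih, pow_succ, Nat.factorial_succ]
    push_cast
    linear_combination -((-1 : ℂ)) ^ k * k.factorial * choose_step m k

lemma skyburst_key (m n : ℕ) (z : ℂ) :
    z ^ m * skyburst n (m : ℝ) z =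
      ∑ ℓ ∈ Finset.range (m + n + 1),
        ((-1 : ℂ) ^ ℓ * ℓ.factorial * n.choose ℓ * m.choose ℓ) /
            (ascPochhammer ℂ ℓ).eval (-((m + n : ℕ) : ℂ)) * z ^ (m + n - ℓ) := by
  rw [skyburst, Finset.mul_sum]
  rw [← Finset.sum_subset (Finset.range_subset_range.mpr (by omega : n + 1 ≤ m + n + 1))]
  · apply Finset.sum_congr rfl
    intro ℓ hℓ
    have hℓn : ℓ ≤ n := by simpa using Nat.lt_succ_iff.mp (Finset.mem_range.mp hℓ)
    have h1 : -(n : ℂ) - ((m : ℝ) : ℂ) = -((m + n : ℕ) : ℂ) := by push_cast; ring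
    have h2 : (-(((m : ℝ)) : ℂ)) = -((m : ℕ) : ℂ) := by push_cast; ring
    rw [h1, h2, asc_neg_nat]
    have h3 : z ^ m * z ^ (n - ℓ) = z ^ (m + n - ℓ) := by
      rw [← pow_add]
      congr 1
      omega
    rw [← h3]
    ring
  · intro ℓ _ hℓ
    have : n < ℓ := by simpa using hℓ
    rw [Nat.choose_eq_zero_of_lt this]
    simp

theorem skyburst_param_degree_symmetry (m n : ℕ) (z : ℂ) :
    z ^ m * skyburst n (m : ℝ) z = z ^ n * skyburst m (n : ℝ) z := by
  rw [skyburst_key m n z, skyburst_key n m z]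
  rw [Nat.add_comm n m]
  apply Finset.sum_congr rfl
  intro ℓ _
  ring
end

section
/- Let ω > 0 be a real number and let z, T ∈ ℂ satisfy |T| < 1 and |zT| < 1. Then the series Σ_{n=0}^∞ ((1+ω)_n/n!) S_n^ω(z) T^n converges and its sum equals (1+T)^ω/(1−zT)^{ω+1}, where the complex powers are taken with the principal branch (well defined since Re(1+T) > 0 and Re(1−zT) > 0). -/
open Finset Polynomial

/-- generalized binomial coefficient `C(a,n)` -/
noncomputable def gbc (a : ℂ) (n : ℕ) : ℂ :=
  (ascPochhammer ℂ n).eval (-a) * (-1) ^ n / n.factorial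

lemma gbc_zero (a : ℂ) : gbc a 0 = 1 := by simp [gbc]

lemma gbc_succ (a : ℂ) (n : ℕ) :
    gbc a (n + 1) = gbc a n * (a - n) / (n + 1) := by
  have h1 : ((n + 1).factorial : ℂ) = (n + 1) * n.factorial := by
    push_cast [Nat.factorial_succ]; ring
  have h2 : (n.factorial : ℂ) ≠ 0 := Nat.cast_ne_zero.2 n.factorial_ne_zero
  have h3 : ((n : ℂ) + 1) ≠ 0 := by
    have := Nat.cast_ne_zero (R := ℂ).2 (Nat.succ_ne_zero n)
    push_cast at this; exact this
  rw [gbc, gbc, ascPochhammer_succ_eval, h1]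
  field_simp
  ring

lemma norm_gbc_succ (a : ℂ) (n : ℕ) :
    ‖gbc a (n + 1)‖ = ‖gbc a n‖ * ‖a - n‖ / (n + 1) := by
  rw [gbc_succ, norm_div, norm_mul]
  congr 1
  have : ((n : ℂ) + 1) = ((n + 1 : ℕ) : ℂ) := by push_cast; ring
  rw [this, Complex.norm_natCast]
  push_cast; ring

lemma norm_gbc_le (a : ℂ) (n : ℕ) :
    ‖gbc a n‖ ≤ ((n : ℝ) + 1) ^ (⌈‖a‖⌉₊ + 1) := by
  set k := ⌈‖a‖⌉₊ + 1 with hk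
  have hak : ‖a‖ ≤ k := by
    have := Nat.le_ceil ‖a‖
    push_cast [hk]; linarith
  induction n with
  | zero => simp [gbc_zero]
  | succ n ih =>
    have hn1 : (0 : ℝ) < (n : ℝ) + 1 := by positivity
    have hb : ‖a - n‖ ≤ (k : ℝ) + n := by
      calc ‖a - n‖ ≤ ‖a‖ + ‖(n : ℂ)‖ := norm_sub_le _ _
        _ = ‖a‖ + n := by rw [Complex.norm_natCast]
        _ ≤ k + n := by linarith
    have key : ((n : ℝ) + 1) ^ k * ((k : ℝ) + n) ≤ ((n : ℝ) + 2) ^ k * ((n : ℝ) + 1) := by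
      set t : ℝ := (n : ℝ) + 1 with ht
      have htpos : 0 < t := hn1
      have hber : 1 + (k : ℝ) * (1 / t) ≤ (1 + 1 / t) ^ k := by
        apply one_add_mul_le_pow
        have : (0:ℝ) ≤ 1/t := by positivity
        linarith
      have h2 : ((n : ℝ) + 2) ^ k = t ^ k * (1 + 1 / t) ^ k := by
        rw [← mul_pow]
        congr 1
        field_simp
        ring
      calc t ^ k * ((k : ℝ) + n)
          ≤ t ^ k * ((1 + (k:ℝ) * (1/t)) * t) := by
            apply mul_le_mul_of_nonneg_left _ (by positivity)
            have : (1 + (k:ℝ) * (1/t)) * t = t + k := by field_simp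
            rw [this]; push_cast [ht]; linarith
        _ ≤ t ^ k * ((1 + 1/t) ^ k * t) :=
            mul_le_mul_of_nonneg_left (mul_le_mul_of_nonneg_right hber htpos.le) (by positivity)
        _ = ((n : ℝ) + 2) ^ k * t := by rw [h2]; ring
    calc ‖gbc a (n + 1)‖ = ‖gbc a n‖ * ‖a - n‖ / (n + 1) := norm_gbc_succ a n
      _ ≤ ((n : ℝ) + 1) ^ k * ((k : ℝ) + n) / (n + 1) := by
          have := mul_le_mul ih hb (norm_nonneg _) (by positivity : (0:ℝ) ≤ ((n : ℝ) + 1) ^ k)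
          gcongr
      _ ≤ ((n : ℝ) + 2) ^ k * ((n : ℝ) + 1) / (n + 1) := by gcongr
      _ = ((n : ℝ) + 2) ^ k := by field_simp
      _ = (((n+1) : ℕ) + 1 : ℝ) ^ k := by push_cast; ring_nf

lemma summable_npow_geom (k : ℕ) {q : ℝ} (h0 : 0 ≤ q) (h1 : q < 1) :
    Summable (fun n : ℕ => ((n : ℝ) + 1) ^ k * q ^ n) := by
  rcases eq_or_lt_of_le h0 with h | h
  · apply summable_of_ne_finset_zero (s := {0})
    intro n hn
    simp only [Finset.mem_singleton] at hn
    rw [← h, zero_pow hn, mul_zero]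
  · have hq : ‖q‖ < 1 := by rwa [Real.norm_eq_abs, abs_of_nonneg h0]
    have S0 : Summable (fun n : ℕ => (n : ℝ) ^ k * q ^ n) :=
      summable_pow_mul_geometric_of_norm_lt_one k hq
    have S1 : Summable (fun n : ℕ => ((n + 1 : ℕ) : ℝ) ^ k * q ^ (n + 1)) :=
      (summable_nat_add_iff 1).2 S0
    have S2 := S1.mul_left q⁻¹
    refine S2.congr fun n => ?_
    push_cast
    field_simp
    ring

lemma summable_norm_gbc_smul (a : ℂ) {q : ℝ} (h0 : 0 ≤ q) (h1 : q < 1) :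
    Summable (fun n : ℕ => ‖gbc a n‖ * ((n : ℝ) + 1) * q ^ n) := by
  set k := ⌈‖a‖⌉₊ + 1 with hk
  refine Summable.of_nonneg_of_le (fun n => by positivity) (fun n => ?_)
    (summable_npow_geom (k + 1) h0 h1)
  have h2 : ((n : ℝ) + 1) ^ (k + 1) = ((n : ℝ) + 1) ^ k * ((n : ℝ) + 1) := pow_succ _ _
  rw [h2]
  have := norm_gbc_le a n
  rw [← hk] at this
  have hqn : (0:ℝ) ≤ q ^ n := by positivity
  exact mul_le_mul_of_nonneg_right
    (mul_le_mul_of_nonneg_right this (by positivity)) hqn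

lemma summable_norm_gbc (a : ℂ) {x : ℂ} (hx : ‖x‖ < 1) :
    Summable (fun n : ℕ => ‖gbc a n * x ^ n‖) := by
  refine Summable.of_nonneg_of_le (fun n => norm_nonneg _) (fun n => ?_)
    (summable_norm_gbc_smul a (norm_nonneg x) hx)
  rw [norm_mul, norm_pow]
  have h1 : ‖gbc a n‖ ≤ ‖gbc a n‖ * ((n:ℝ)+1) := by
    nlinarith [norm_nonneg (gbc a n), Nat.cast_nonneg (α := ℝ) n]
  exact mul_le_mul_of_nonneg_right h1 (by positivity)

lemma summable_deriv_bound (a : ℂ) {q : ℝ} (h0 : 0 < q) (h1 : q < 1) :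
    Summable (fun n : ℕ => ‖gbc a n‖ * n * q ^ (n - 1)) := by
  have S := (summable_norm_gbc_smul a h0.le h1).mul_left q⁻¹
  refine Summable.of_nonneg_of_le (fun n => by positivity) (fun n => ?_) S
  cases n with
  | zero => simp only [Nat.cast_zero, mul_zero, zero_mul]; positivity
  | succ m =>
    have : q⁻¹ * (‖gbc a (m+1)‖ * ((m+1 : ℕ) + 1) * q ^ (m+1))
        = ‖gbc a (m+1)‖ * ((m:ℝ)+2) * q ^ m := by
      push_cast
      field_simp
      ring
    rw [this]
    simp only [Nat.add_sub_cancel]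
    push_cast
    nlinarith [norm_nonneg (gbc a (m+1)), pow_nonneg h0.le m,
      mul_le_mul_of_nonneg_right (mul_le_mul_of_nonneg_left
        (by linarith : (m:ℝ)+1 ≤ (m:ℝ)+2) (norm_nonneg (gbc a (m+1)))) (pow_nonneg h0.le m)]

lemma onePlus_mem_slitPlane {w : ℂ} (hw : ‖w‖ < 1) : 1 + w ∈ Complex.slitPlane := by
  rw [Complex.mem_slitPlane_iff]
  left
  have h1 : |w.re| ≤ ‖w‖ := Complex.abs_re_le_norm w
  simp only [Complex.add_re, Complex.one_re]
  cases abs_le.1 h1 with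
  | intro h _ => linarith

lemma onePlus_ne_zero {w : ℂ} (hw : ‖w‖ < 1) : 1 + w ≠ 0 :=
  Complex.slitPlane_ne_zero (onePlus_mem_slitPlane hw)

/-- The binomial series. -/
theorem hasSum_gbc (a : ℂ) {w : ℂ} (hw : ‖w‖ < 1) :
    HasSum (fun n : ℕ => gbc a n * w ^ n) ((1 + w) ^ a) := by
  classical
  set f : ℂ → ℂ := fun x => ∑' n : ℕ, gbc a n * x ^ n with hf
  have hsum : ∀ x : ℂ, ‖x‖ < 1 → Summable (fun n : ℕ => gbc a n * x ^ n) :=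
    fun x hx => (summable_norm_gbc a hx).of_norm
  have hderiv : ∀ x : ℂ, ‖x‖ < 1 → ∃ D : ℂ, HasDerivAt f D x ∧ (1 + x) * D = a * f x := by
    intro x hx
    set ρ : ℝ := (‖x‖ + 1) / 2 with hρ
    have hx0 : 0 ≤ ‖x‖ := norm_nonneg x
    have hρ0 : 0 < ρ := by positivity
    have hρ1 : ρ < 1 := by rw [hρ]; linarith
    have hxρ : x ∈ Metric.ball (0 : ℂ) ρ := by
      rw [Metric.mem_ball, dist_zero_right, hρ]; linarith
    set D : ℂ := ∑' n : ℕ, gbc a n * ((n : ℂ) * x ^ (n - 1)) with hD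
    have hmem : ∀ y ∈ Metric.ball (0 : ℂ) ρ, ‖y‖ < 1 := by
      intro y hy
      rw [Metric.mem_ball, dist_zero_right] at hy
      linarith
    have hbound : ∀ (n : ℕ) (y : ℂ), ‖y‖ ≤ ρ →
        ‖gbc a n * ((n : ℂ) * y ^ (n - 1))‖ ≤ ‖gbc a n‖ * n * ρ ^ (n - 1) := by
      intro n y hy
      rw [norm_mul, norm_mul, norm_pow, Complex.norm_natCast, ← mul_assoc]
      gcongr
    have hDer : HasDerivAt f D x := by
      refine hasDerivAt_tsum_of_isPreconnected (summable_deriv_bound a hρ0 hρ1)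
        Metric.isOpen_ball (convex_ball (0:ℂ) ρ).isPreconnected
        (fun n y _ => ((hasDerivAt_pow n y).const_mul (gbc a n))) ?_ hxρ
        (hsum x (hmem x hxρ)) hxρ
      intro n y hy
      rw [Metric.mem_ball, dist_zero_right] at hy
      exact hbound n y hy.le
    refine ⟨D, hDer, ?_⟩
    have hDsum : HasSum (fun n : ℕ => gbc a n * ((n : ℂ) * x ^ (n - 1))) D := by
      apply Summable.hasSum
      apply Summable.of_norm
      refine Summable.of_nonneg_of_le (fun n => norm_nonneg _) (fun n => ?_)
        (summable_deriv_bound a hρ0 hρ1)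
      exact hbound n x (by rw [hρ]; linarith)
    have hshift : HasSum (fun n : ℕ => gbc a n * (a - n) * x ^ n) D := by
      have h1 := (hasSum_nat_add_iff'
        (f := fun n => gbc a n * ((n : ℂ) * x ^ (n - 1))) 1).2 hDsum
      simp only [Finset.range_one, Finset.sum_singleton, Nat.cast_zero, zero_mul,
        mul_zero, sub_zero] at h1
      have heq : (fun n : ℕ => gbc a (n + 1) * (((n + 1 : ℕ) : ℂ) * x ^ (n + 1 - 1)))
          = fun n : ℕ => gbc a n * (a - n) * x ^ n := by
        funext n
        have h3 : ((n : ℂ) + 1) ≠ 0 := by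
          exact_mod_cast Nat.cast_ne_zero (R := ℂ).2 (Nat.succ_ne_zero n)
        rw [gbc_succ]
        simp only [Nat.add_sub_cancel]
        push_cast
        field_simp
      rwa [heq] at h1
    have hxD : HasSum (fun n : ℕ => gbc a n * (n : ℂ) * x ^ n) (x * D) := by
      have h2 := hDsum.mul_left x
      have heq : (fun n : ℕ => x * (gbc a n * ((n : ℂ) * x ^ (n - 1))))
          = fun n : ℕ => gbc a n * (n : ℂ) * x ^ n := by
        funext n
        cases n with
        | zero => simp
        | succ m =>
          simp only [Nat.add_sub_cancel]
          push_cast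
          rw [pow_succ]
          ring
      rwa [heq] at h2
    have hadd := hshift.add hxD
    have heq : (fun n : ℕ => gbc a n * (a - n) * x ^ n + gbc a n * (n : ℂ) * x ^ n)
        = fun n : ℕ => a * (gbc a n * x ^ n) := by
      funext n; ring
    rw [heq] at hadd
    have hfx : HasSum (fun n : ℕ => a * (gbc a n * x ^ n)) (a * f x) :=
      (hsum x hx).hasSum.mul_left a
    have := hadd.unique hfx
    rw [add_mul, one_mul, this.symm]
  -- constancy of h := f * (1+·)^(-a)
  set h : ℂ → ℂ := fun x => f x * (1 + x) ^ (-a) with hh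
  have hconst : ∀ x : ℂ, ‖x‖ < 1 → h x = h 0 := by
    intro x hx
    have hball : ∀ y ∈ Metric.ball (0 : ℂ) 1, HasDerivAt h 0 y := by
      intro y hy
      rw [Metric.mem_ball, dist_zero_right] at hy
      obtain ⟨D, hD, hode⟩ := hderiv y hy
      have hs : 1 + y ∈ Complex.slitPlane := onePlus_mem_slitPlane hy
      have hne : (1 : ℂ) + y ≠ 0 := onePlus_ne_zero hy
      have hcp : HasDerivAt (fun x : ℂ => (1 + x) ^ (-a))
          (-a * (1 + y) ^ (-a - 1) * 1) y :=
        (((hasDerivAt_id y).const_add 1).cpow_const hs)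
      have hprod := hD.mul hcp
      have : D * (1 + y) ^ (-a) + f y * (-a * (1 + y) ^ (-a - 1) * 1) = 0 := by
        have hsplit : (1 + y) ^ (-a) = (1 + y) ^ (-a - 1) * (1 + y) := by
          have hexp : -a = (-a - 1) + 1 := by ring
          conv_lhs => rw [hexp]
          rw [Complex.cpow_add _ _ hne, Complex.cpow_one]
        rw [hsplit]
        have : D * ((1 + y) ^ (-a - 1) * (1 + y)) = a * f y * (1 + y) ^ (-a - 1) := by
          rw [show D * ((1 + y) ^ (-a - 1) * (1 + y)) = ((1 + y) * D) * (1 + y) ^ (-a - 1) by ring,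
            hode]
        rw [this]; ring
      rw [this] at hprod
      exact hprod
    have h0m : (0 : ℂ) ∈ Metric.ball (0 : ℂ) 1 := by simp
    have hxm : x ∈ Metric.ball (0 : ℂ) 1 := by
      rwa [Metric.mem_ball, dist_zero_right]
    have := Convex.norm_image_sub_le_of_norm_hasFDerivWithin_le
      (f := h) (f' := fun _ => ContinuousLinearMap.smulRight (1 : ℂ →L[ℂ] ℂ) (0 : ℂ)) (C := 0)
      (fun y hy => ((hball y hy).hasFDerivAt).hasFDerivWithinAt)
      (fun y _ => by simp) (convex_ball (0:ℂ) 1) h0m hxm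
    simp only [norm_zero, zero_mul] at this
    have := norm_le_zero_iff.1 (this.trans_eq (by ring))
    exact sub_eq_zero.1 this
  have hf0 : f 0 = 1 := by
    have hfe : f 0 = ∑' n : ℕ, gbc a n * (0 : ℂ) ^ n := rfl
    rw [hfe, tsum_eq_single 0]
    · simp [gbc_zero]
    · intro n hn
      cases n with
      | zero => exact absurd rfl hn
      | succ m => simp
  have hx1 : h w = 1 := by
    rw [hconst w hw, hh]
    simp only [add_zero, hf0, one_mul, Complex.one_cpow]
  have hne : (1 : ℂ) + w ≠ 0 := onePlus_ne_zero hw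
  have hcne : ((1 : ℂ) + w) ^ a ≠ 0 := by
    intro hc
    rw [Complex.cpow_eq_zero_iff] at hc
    exact hne hc.1
  have hfw : f w = (1 + w) ^ a := by
    have := hx1
    rw [hh] at this
    simp only at this
    rw [Complex.cpow_neg] at this
    field_simp at this
    exact this
  have hfin := (hsum w hw).hasSum
  have h2 : (∑' b : ℕ, gbc a b * w ^ b) = f w := rfl
  rwa [h2, hfw] at hfin

lemma poch_split (x : ℂ) (k n : ℕ) (hk : k ≤ n) :
    (ascPochhammer ℂ n).eval (1 + x)
      = (-1) ^ k * (ascPochhammer ℂ k).eval (-(n : ℂ) - x)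
        * (ascPochhammer ℂ (n - k)).eval (1 + x) := by
  induction k with
  | zero => simp
  | succ k ih =>
    have hk' : k ≤ n := Nat.le_of_succ_le hk
    have ihh := ih hk'
    have hm : n - k = (n - (k + 1)) + 1 := by omega
    rw [hm, ascPochhammer_succ_eval] at ihh
    rw [ascPochhammer_succ_eval]
    have hcast : ((n - (k + 1) : ℕ) : ℂ) = (n : ℂ) - k - 1 := by
      have : ((n - (k + 1) : ℕ) : ℂ) = ((n : ℕ) : ℂ) - ((k + 1 : ℕ) : ℂ) := by
        rw [Nat.cast_sub hk]
      rw [this]; push_cast; ring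
    rw [ihh, hcast]
    ring

lemma poch_ne_zero (ω : ℝ) (hω : 0 < ω) (k n : ℕ) (hk : k ≤ n) :
    (ascPochhammer ℂ k).eval (-(n : ℂ) - (ω : ℂ)) ≠ 0 := by
  intro hzero
  rw [ascPochhammer_eval_eq_zero_iff] at hzero
  obtain ⟨j, hj, hje⟩ := hzero
  have : (j : ℂ) = (n : ℂ) + (ω : ℂ) := by rw [hje]; ring
  have hre := congrArg Complex.re this
  simp only [Complex.natCast_re, Complex.add_re, Complex.ofReal_re] at hre
  have hjn : (j : ℝ) < n := by exact_mod_cast lt_of_lt_of_le hj hk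
  linarith


lemma term_eq (ω : ℝ) (hω : 0 < ω) (z T : ℂ) (n : ℕ) :
    ((ascPochhammer ℂ n).eval (1 + (ω : ℂ)) / (n.factorial : ℂ)) * skyburst n ω z * T ^ n
      = ∑ kl ∈ Finset.HasAntidiagonal.antidiagonal n,
          (gbc (ω : ℂ) kl.1 * T ^ kl.1) * (gbc (-((ω : ℂ) + 1)) kl.2 * (-(z * T)) ^ kl.2) := by
  have hsky : skyburst n ω z = ∑ ℓ ∈ Finset.range (n + 1),
      (n.choose ℓ : ℂ) *
        ((ascPochhammer ℂ ℓ).eval (-(ω : ℂ)) / (ascPochhammer ℂ ℓ).eval (-(n : ℂ) - (ω : ℂ))) *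
        z ^ (n - ℓ) := rfl
  rw [Finset.Nat.sum_antidiagonal_eq_sum_range_succ_mk, hsky, Finset.mul_sum, Finset.sum_mul]
  refine Finset.sum_congr rfl fun k hk => ?_
  rw [Finset.mem_range, Nat.lt_succ_iff] at hk
  have hP := poch_ne_zero ω hω k n hk
  have hsplit := poch_split (ω : ℂ) k n hk
  have hfn : ((n.factorial : ℂ)) ≠ 0 := Nat.cast_ne_zero.2 n.factorial_ne_zero
  have hfk : ((k.factorial : ℂ)) ≠ 0 := Nat.cast_ne_zero.2 k.factorial_ne_zero
  have hfnk : (((n - k).factorial : ℂ)) ≠ 0 := Nat.cast_ne_zero.2 (n - k).factorial_ne_zero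
  have hchoose : ((n.choose k : ℂ)) * (k.factorial : ℂ) * ((n - k).factorial : ℂ)
      = (n.factorial : ℂ) := by
    exact_mod_cast congrArg (Nat.cast : ℕ → ℂ) (Nat.choose_mul_factorial_mul_factorial hk)
  have hTn : T ^ k * T ^ (n - k) = T ^ n := by
    rw [← pow_add]
    congr 1
    omega
  have hneg : (-((ω : ℂ) + 1)) = -((ω : ℂ) + 1) := rfl
  have hgb2 : gbc (-((ω : ℂ) + 1)) (n - k)
      = (ascPochhammer ℂ (n - k)).eval (1 + (ω : ℂ)) * (-1) ^ (n - k) / ((n - k).factorial : ℂ) := by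
    rw [gbc, neg_neg, add_comm]
  have hs1 : ((-1 : ℂ)) ^ k * (-1) ^ k = 1 := by
    rw [← mul_pow]; norm_num
  have hs2 : ((-1 : ℂ)) ^ (n - k) * (-1) ^ (n - k) = 1 := by
    rw [← mul_pow]; norm_num
  rw [gbc, hgb2, hsplit]
  rw [show (-(z * T)) ^ (n - k) = (-1) ^ (n - k) * (z ^ (n - k) * T ^ (n - k)) by
    rw [neg_pow, mul_pow]]
  rw [← hTn, ← hchoose]
  have hC : ((n.choose k : ℂ)) ≠ 0 :=
    Nat.cast_ne_zero.2 (Nat.choose_pos hk).ne'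
  have hs3 : ((-1 : ℂ)) ^ ((n - k) * 2) = 1 := by
    rw [pow_mul]
    rw [sq, hs2]
  field_simp
  ring_nf
  rw [hs3, mul_one]
  try field_simp
  try ring

theorem skyburst_generating_function (ω : ℝ) (hω : 0 < ω) (z T : ℂ)
    (hT : ‖T‖ < 1) (hzT : ‖z * T‖ < 1) :
    HasSum
      (fun n : ℕ =>
        ((ascPochhammer ℂ n).eval (1 + (ω : ℂ)) / (n.factorial : ℂ)) * skyburst n ω z * T ^ n)
      ((1 + T) ^ (ω : ℂ) / (1 - z * T) ^ ((ω : ℂ) + 1)) := by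
  have hT' : ‖T‖ < 1 := by exact hT
  have hzT' : ‖-(z * T)‖ < 1 := by rwa [norm_neg]
  set f1 : ℕ → ℂ := fun n => gbc (ω : ℂ) n * T ^ n with hf1def
  set f2 : ℕ → ℂ := fun n => gbc (-((ω : ℂ) + 1)) n * (-(z * T)) ^ n with hf2def
  have h1 : HasSum f1 ((1 + T) ^ (ω : ℂ)) := hasSum_gbc _ hT'
  have h2 : HasSum f2 ((1 + -(z * T)) ^ (-((ω : ℂ) + 1))) := hasSum_gbc _ hzT'
  have hn1 : Summable fun n => ‖f1 n‖ := summable_norm_gbc _ hT'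
  have hn2 : Summable fun n => ‖f2 n‖ := summable_norm_gbc _ hzT'
  have hsum : Summable fun n => ∑ kl ∈ Finset.HasAntidiagonal.antidiagonal n, f1 kl.1 * f2 kl.2 :=
    (summable_norm_sum_mul_antidiagonal_of_summable_norm hn1 hn2).of_norm
  have htsum : (∑' n, f1 n) * (∑' n, f2 n)
      = ∑' n, ∑ kl ∈ Finset.HasAntidiagonal.antidiagonal n, f1 kl.1 * f2 kl.2 :=
    tsum_mul_tsum_eq_tsum_sum_antidiagonal_of_summable_norm hn1 hn2
  have hS : HasSum (fun n => ∑ kl ∈ Finset.HasAntidiagonal.antidiagonal n, f1 kl.1 * f2 kl.2)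
      (((1 + T) ^ (ω : ℂ)) * ((1 + -(z * T)) ^ (-((ω : ℂ) + 1)))) := by
    have := hsum.hasSum
    rwa [← htsum, h1.tsum_eq, h2.tsum_eq] at this
  have hval : ((1 + T) ^ (ω : ℂ)) * ((1 + -(z * T)) ^ (-((ω : ℂ) + 1)))
      = (1 + T) ^ (ω : ℂ) / (1 - z * T) ^ ((ω : ℂ) + 1) := by
    rw [show (1 : ℂ) + -(z * T) = 1 - z * T by ring, Complex.cpow_neg, div_eq_mul_inv]
  rw [hval] at hS
  have heq : (fun n : ℕ =>
      ((ascPochhammer ℂ n).eval (1 + (ω : ℂ)) / (n.factorial : ℂ)) * skyburst n ω z * T ^ n)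
      = fun n => ∑ kl ∈ Finset.HasAntidiagonal.antidiagonal n, f1 kl.1 * f2 kl.2 :=
    funext fun n => term_eq ω hω z T n
  rwa [heq]
end

section
/- Let ω > 0 be a real number and n ∈ ℕ. Then S_n^ω(−1) = (−1)^n · n!/(1+ω)_n; in particular S_n^ω(−1) ≠ 0. -/
open Finset Polynomial

lemma smeval_desc (k : ℕ) (x : ℂ) :
    (descPochhammer ℤ k).smeval x = (descPochhammer ℂ k).eval x := by
  rw [← aeval_eq_smeval, aeval_def, ← eval_map, descPochhammer_map (algebraMap ℤ ℂ)]

lemma desc_eval_neg (k : ℕ) (a : ℂ) :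
    (descPochhammer ℂ k).eval (-a) = (-1) ^ k * (ascPochhammer ℂ k).eval a := by
  have h := ascPochhammer_eval_neg_eq_descPochhammer (R := ℂ) (-a) k
  rw [neg_neg] at h
  rw [h, ← mul_assoc, ← mul_pow]
  simp

lemma asc_vandermonde (n : ℕ) (a b : ℂ) :
    (ascPochhammer ℂ n).eval (a + b) = ∑ ℓ ∈ Finset.range (n + 1),
      (n.choose ℓ : ℂ) * ((ascPochhammer ℂ ℓ).eval a *
        (ascPochhammer ℂ (n - ℓ)).eval b) := by
  have h := Ring.descPochhammer_smeval_add (R := ℂ) (r := -a) (s := -b) n (Commute.all _ _)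
  simp only [smeval_desc] at h
  rw [Finset.Nat.sum_antidiagonal_eq_sum_range_succ_mk] at h
  have hn : (-a) + (-b) = -(a + b) := by ring
  rw [hn, desc_eval_neg] at h
  have h2 : ∀ ℓ ∈ Finset.range (n + 1),
      (n.choose ℓ : ℂ) * ((descPochhammer ℂ ℓ).eval (-a) *
        (descPochhammer ℂ (n - ℓ)).eval (-b)) =
      (-1) ^ n * ((n.choose ℓ : ℂ) * ((ascPochhammer ℂ ℓ).eval a *
        (ascPochhammer ℂ (n - ℓ)).eval b)) := by
    intro ℓ hℓ
    rw [desc_eval_neg, desc_eval_neg, show ∀ x y z : ℂ,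
      (n.choose ℓ : ℂ) * ((-1)^ℓ * x * ((-1)^(n-ℓ) * y)) =
        (-1)^ℓ * (-1)^(n-ℓ) * ((n.choose ℓ : ℂ) * (x * y)) from fun x y z => by ring,
      ← pow_add, Nat.add_sub_cancel' (Nat.lt_succ_iff.mp (Finset.mem_range.mp hℓ))]
    · exact 0
  rw [Finset.sum_congr rfl h2, ← Finset.mul_sum] at h
  have hne : ((-1 : ℂ)) ^ n ≠ 0 := by simp
  exact mul_left_cancel₀ hne h

lemma evalR (k : ℕ) (r : ℝ) :
    (ascPochhammer ℂ k).eval (r : ℂ) = Complex.ofReal ((ascPochhammer ℝ k).eval r) := by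
  induction k with
  | zero => simp
  | succ k ih => rw [ascPochhammer_succ_eval, ascPochhammer_succ_eval]; push_cast [ih]; ring

lemma asc_pos_ne (k : ℕ) {r : ℝ} (hr : 0 < r) :
    (ascPochhammer ℂ k).eval (r : ℂ) ≠ 0 := by
  rw [evalR]
  exact_mod_cast (ascPochhammer_pos k r hr).ne'


theorem skyburst_at_neg_one (ω : ℝ) (hω : 0 < ω) (n : ℕ) :
    skyburst n ω (-1) = (-1 : ℂ) ^ n * (n.factorial : ℂ) / (ascPochhammer ℂ n).eval (1 + (ω : ℂ))
      ∧ skyburst n ω (-1) ≠ 0 := by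
  have hden : (ascPochhammer ℂ n).eval (1 + (ω : ℂ)) ≠ 0 := by
    have h0 : (0:ℝ) < 1 + ω := by linarith
    have h1 := asc_pos_ne n h0
    rwa [show ((1 + ω : ℝ) : ℂ) = 1 + (ω : ℂ) by push_cast; ring] at h1
  have key : skyburst n ω (-1)
      = (-1 : ℂ) ^ n * (n.factorial : ℂ) / (ascPochhammer ℂ n).eval (1 + (ω : ℂ)) := by
    rw [skyburst]
    have hterm : ∀ ℓ ∈ Finset.range (n + 1),
        (n.choose ℓ : ℂ) *
          ((ascPochhammer ℂ ℓ).eval (-(ω : ℂ)) / (ascPochhammer ℂ ℓ).eval (-(n : ℂ) - (ω : ℂ))) *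
          (-1 : ℂ) ^ (n - ℓ)
        = (-1 : ℂ) ^ n / (ascPochhammer ℂ n).eval (1 + (ω : ℂ)) *
          ((n.choose ℓ : ℂ) * ((ascPochhammer ℂ ℓ).eval (-(ω : ℂ)) *
            (ascPochhammer ℂ (n - ℓ)).eval (1 + (ω : ℂ)))) := by
      intro ℓ hℓ
      have hℓn : ℓ ≤ n := Nat.lt_succ_iff.mp (Finset.mem_range.mp hℓ)
      have hcast : ((n - ℓ : ℕ) : ℂ) = (n : ℂ) - (ℓ : ℂ) := Nat.cast_sub hℓn
      have hsplit : (ascPochhammer ℂ n).eval (1 + (ω : ℂ)) =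
          (ascPochhammer ℂ (n - ℓ)).eval (1 + (ω : ℂ)) *
            (ascPochhammer ℂ ℓ).eval (1 + (ω : ℂ) + ((n : ℂ) - (ℓ : ℂ))) := by
        have h2 := congrArg (Polynomial.eval (1 + (ω : ℂ))) (ascPochhammer_mul (S := ℂ) (n - ℓ) ℓ)
        rw [eval_mul, eval_comp, eval_add, eval_X, eval_natCast,
          Nat.sub_add_cancel hℓn, hcast] at h2
        exact h2.symm
      have hB : (ascPochhammer ℂ ℓ).eval (-(n : ℂ) - (ω : ℂ))
          = (-1) ^ ℓ * (ascPochhammer ℂ ℓ).eval (1 + (ω : ℂ) + ((n : ℂ) - (ℓ : ℂ))) := by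
        rw [show -(n : ℂ) - (ω : ℂ) = -((n : ℂ) + ω) by ring,
          ascPochhammer_eval_neg_eq_descPochhammer (R := ℂ) ((n : ℂ) + ω) ℓ,
          descPochhammer_eval_eq_ascPochhammer,
          show (n : ℂ) + (ω : ℂ) - (ℓ : ℕ) + 1 = 1 + (ω : ℂ) + ((n : ℂ) - (ℓ : ℂ)) by ring]
      have hQne : (ascPochhammer ℂ ℓ).eval (1 + (ω : ℂ) + ((n : ℂ) - (ℓ : ℂ))) ≠ 0 := by
        have h0 : (0:ℝ) < 1 + ω + ((n - ℓ : ℕ) : ℝ) := by positivity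
        have h1 := asc_pos_ne ℓ h0
        rwa [show ((1 + ω + ((n - ℓ : ℕ) : ℝ) : ℝ) : ℂ)
            = 1 + (ω : ℂ) + ((n : ℂ) - (ℓ : ℂ)) by push_cast [Nat.cast_sub hℓn]; ring] at h1
      have hPnl : (ascPochhammer ℂ (n - ℓ)).eval (1 + (ω : ℂ)) ≠ 0 :=
        fun h => hden (by rw [hsplit, h, zero_mul])
      rw [hB, hsplit]
      field_simp
      rw [show ((-1:ℂ))^n = (-1)^(n-ℓ) * (-1)^ℓ by
        rw [← pow_add, Nat.sub_add_cancel hℓn]]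
      ring_nf
      rw [mul_comm ℓ 2, pow_mul]
      norm_num
    rw [Finset.sum_congr rfl hterm, ← Finset.mul_sum, ← asc_vandermonde]
    rw [show -(ω : ℂ) + (1 + (ω : ℂ)) = 1 by ring, ascPochhammer_eval_one,
      div_mul_eq_mul_div, mul_comm]
  refine ⟨key, ?_⟩
  rw [key]
  apply div_ne_zero _ hden
  exact mul_ne_zero (by simp) (by exact_mod_cast n.factorial_ne_zero)
end

section
/- Let ω > 0 be a real number, n ∈ ℕ, and let m be an integer with 0 ≤ m ≤ n. Then the m-th derivative of S_n^ω at z = −1 equals (d^m/dz^m) S_n^ω(−1) = (−1)^{n−m} · n! · ((1+ω)_m/(1+ω)_n) · binom(n,m). -/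
open Finset Polynomial

lemma poch_prod (k : ℕ) (x : ℂ) :
    (ascPochhammer ℂ k).eval x = ∏ i ∈ range k, (x + i) := by
  induction k with
  | zero => simp
  | succ k ih => rw [ascPochhammer_succ_eval, ih, prod_range_succ]

lemma iteratedDeriv_polyeval (P : ℂ[X]) (m : ℕ) :
    iteratedDeriv m (fun z => P.eval z) = fun z => (derivative^[m] P).eval z := by
  induction m with
  | zero => simp
  | succ m ih =>
    rw [iteratedDeriv_succ, ih]
    funext z
    rw [Function.iterate_succ_apply']
    exact Polynomial.deriv _

lemma vand (x y : ℂ) (N : ℕ) : (ascPochhammer ℂ N).eval (x + y) =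
    ∑ j ∈ range (N + 1),
      (N.choose j : ℂ) * (ascPochhammer ℂ j).eval x * (ascPochhammer ℂ (N - j)).eval y := by
  induction N with
  | zero => simp
  | succ N ih =>
    rw [ascPochhammer_succ_eval, ih, Finset.sum_mul]
    have step : ∀ j ∈ range (N + 1),
        (N.choose j : ℂ) * (ascPochhammer ℂ j).eval x * (ascPochhammer ℂ (N - j)).eval y *
          (x + y + N)
        = ((N.choose j : ℂ) * (ascPochhammer ℂ (j + 1)).eval x * (ascPochhammer ℂ (N - j)).eval y)
        + ((N.choose j : ℂ) * (ascPochhammer ℂ j).eval x *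
            (ascPochhammer ℂ (N - j + 1)).eval y) := by
      intro j hj
      have hj' : j ≤ N := by simpa using Nat.lt_succ_iff.mp (mem_range.mp hj)
      have hc : ((N - j : ℕ) : ℂ) = (N : ℂ) - (j : ℂ) := by
        push_cast [hj']; ring
      rw [ascPochhammer_succ_eval, ascPochhammer_succ_eval, hc]
      ring
    rw [Finset.sum_congr rfl step, Finset.sum_add_distrib]
    -- split RHS
    rw [Finset.sum_range_succ' (fun j => ((N + 1).choose j : ℂ) * (ascPochhammer ℂ j).eval x *
        (ascPochhammer ℂ (N + 1 - j)).eval y) (N + 1)]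
    have e1 : ∀ j ∈ range (N + 1),
        (((N + 1).choose (j + 1) : ℂ)) * (ascPochhammer ℂ (j + 1)).eval x *
          (ascPochhammer ℂ (N + 1 - (j + 1))).eval y
        = ((N.choose j : ℂ) * (ascPochhammer ℂ (j + 1)).eval x * (ascPochhammer ℂ (N - j)).eval y)
        + ((N.choose (j + 1) : ℂ) * (ascPochhammer ℂ (j + 1)).eval x *
            (ascPochhammer ℂ (N - j)).eval y) := by
      intro j hj
      have : N + 1 - (j + 1) = N - j := by omega
      rw [this, Nat.choose_succ_succ, Nat.cast_add]
      ring
    rw [Finset.sum_congr rfl e1, Finset.sum_add_distrib]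
    -- second sum on LHS
    rw [Finset.sum_range_succ' (fun j => (N.choose j : ℂ) * (ascPochhammer ℂ j).eval x *
        (ascPochhammer ℂ (N - j + 1)).eval y) N]
    have e2 : ∀ j ∈ range N,
        (N.choose (j + 1) : ℂ) * (ascPochhammer ℂ (j + 1)).eval x *
          (ascPochhammer ℂ (N - (j + 1) + 1)).eval y
        = (N.choose (j + 1) : ℂ) * (ascPochhammer ℂ (j + 1)).eval x *
          (ascPochhammer ℂ (N - j)).eval y := by
      intro j hj
      have : N - (j + 1) + 1 = N - j := by have := mem_range.mp hj; omega
      rw [this]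
    rw [Finset.sum_congr rfl e2]
    -- third sum: drop last zero term
    rw [Finset.sum_range_succ (fun j => (N.choose (j + 1) : ℂ) * (ascPochhammer ℂ (j + 1)).eval x *
        (ascPochhammer ℂ (N - j)).eval y) N]
    simp [Nat.choose_succ_self]
    ring

lemma poch_pos_ne (ω : ℝ) (hω : 0 < ω) (k : ℕ) :
    (ascPochhammer ℂ k).eval (1 + (ω : ℂ)) ≠ 0 := by
  rw [poch_prod]
  refine Finset.prod_ne_zero_iff.mpr fun i _ h => ?_
  have h2 : (1 : ℝ) + ω + i = 0 := by
    have := congrArg Complex.re h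
    simpa using this
  have : (0:ℝ) ≤ (i:ℝ) := Nat.cast_nonneg i
  linarith

lemma poch_den_ne (ω : ℝ) (hω : 0 < ω) (n ℓ : ℕ) (hℓ : ℓ ≤ n) :
    (ascPochhammer ℂ ℓ).eval (-(n : ℂ) - (ω : ℂ)) ≠ 0 := by
  rw [poch_prod]
  refine Finset.prod_ne_zero_iff.mpr fun i hi h => ?_
  have h2 : -(n : ℝ) - ω + i = 0 := by
    have := congrArg Complex.re h
    simpa using this
  have hin : (i : ℝ) ≤ (n : ℝ) := by
    exact_mod_cast Nat.le_of_lt_succ (Nat.lt_succ_of_lt (lt_of_lt_of_le (mem_range.mp hi) hℓ))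
  linarith

lemma poch_split_s10 (a : ℂ) (p q : ℕ) :
    (ascPochhammer ℂ (p + q)).eval a =
      (ascPochhammer ℂ p).eval a * (ascPochhammer ℂ q).eval (a + p) := by
  rw [poch_prod, poch_prod, poch_prod, Finset.prod_range_add]
  congr 1
  refine Finset.prod_congr rfl fun i _ => ?_
  push_cast; ring

lemma poch_reflect (ω : ℝ) (n ℓ : ℕ) (hℓ : ℓ ≤ n) :
    (ascPochhammer ℂ ℓ).eval (-(n : ℂ) - (ω : ℂ)) =
      (-1) ^ ℓ * (ascPochhammer ℂ ℓ).eval (1 + (ω : ℂ) + ((n - ℓ : ℕ) : ℂ)) := by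
  rw [poch_prod, poch_prod]
  rw [← Finset.prod_range_reflect (fun j => (-(n : ℂ) - (ω : ℂ) + j)) ℓ]
  have e : ∀ j ∈ range ℓ, (-(n : ℂ) - (ω : ℂ) + ((ℓ - 1 - j : ℕ) : ℂ))
      = (-1) * (1 + (ω : ℂ) + ((n - ℓ : ℕ) : ℂ) + j) := by
    intro j hj
    have hj' := mem_range.mp hj
    rw [show ℓ - 1 - j = ℓ - (j + 1) by omega, Nat.cast_sub (by omega), Nat.cast_sub hℓ]
    push_cast
    ring
  rw [Finset.prod_congr rfl e, Finset.prod_mul_distrib, Finset.prod_const, Finset.card_range]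

lemma natid (n m ℓ : ℕ) (h : ℓ ≤ n - m) (hm : m ≤ n) :
    n.choose ℓ * (n - ℓ).descFactorial m = n.descFactorial m * (n - m).choose ℓ := by
  rw [Nat.descFactorial_eq_factorial_mul_choose, Nat.descFactorial_eq_factorial_mul_choose]
  have h1 := Nat.choose_mul (n := n) (show ℓ ≤ ℓ + m by omega)
  have h2 := Nat.choose_mul (n := n) (show m ≤ ℓ + m by omega)
  rw [show ℓ + m - ℓ = m by omega] at h1
  rw [show ℓ + m - m = ℓ by omega] at h2
  have h3 : (ℓ + m).choose ℓ = (ℓ + m).choose m := by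
    rw [← Nat.choose_symm (show m ≤ ℓ + m by omega), show ℓ + m - m = ℓ by omega]
  have key : n.choose ℓ * (n - ℓ).choose m = n.choose m * (n - m).choose ℓ := by
    rw [← h1, ← h2, h3]
  calc n.choose ℓ * (m.factorial * (n - ℓ).choose m)
      = m.factorial * (n.choose ℓ * (n - ℓ).choose m) := by ring
    _ = m.factorial * (n.choose m * (n - m).choose ℓ) := by rw [key]
    _ = m.factorial * n.choose m * (n - m).choose ℓ := by ring

lemma key (ω : ℝ) (hω : 0 < ω) (n m : ℕ) (hm : m ≤ n) :
    ∑ ℓ ∈ range (n + 1),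
      (n.choose ℓ : ℂ) *
        ((ascPochhammer ℂ ℓ).eval (-(ω : ℂ)) / (ascPochhammer ℂ ℓ).eval (-(n : ℂ) - (ω : ℂ))) *
        (((n - ℓ).descFactorial m : ℕ) : ℂ) * (-1) ^ (n - ℓ - m)
    = (-1 : ℂ) ^ (n - m) * (n.factorial : ℂ) *
        ((ascPochhammer ℂ m).eval (1 + (ω : ℂ)) / (ascPochhammer ℂ n).eval (1 + (ω : ℂ))) *
        (n.choose m : ℂ) := by
  have hsub : range (n - m + 1) ⊆ range (n + 1) := by
    apply Finset.range_subset_range.mpr; omega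
  rw [← Finset.sum_subset hsub (fun ℓ hℓ hℓ' => by
    have h1 : ℓ < n + 1 := mem_range.mp hℓ
    have h2 : ¬ ℓ < n - m + 1 := fun h => hℓ' (mem_range.mpr h)
    rw [Nat.descFactorial_eq_zero_iff_lt.mpr (by omega)]
    simp)]
  have hPn := poch_pos_ne ω hω n
  have term : ∀ ℓ ∈ range (n - m + 1),
      (n.choose ℓ : ℂ) *
        ((ascPochhammer ℂ ℓ).eval (-(ω : ℂ)) / (ascPochhammer ℂ ℓ).eval (-(n : ℂ) - (ω : ℂ))) *
        (((n - ℓ).descFactorial m : ℕ) : ℂ) * (-1) ^ (n - ℓ - m)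
      = ((-1 : ℂ) ^ (n - m) * (n.descFactorial m : ℂ) *
          ((ascPochhammer ℂ m).eval (1 + (ω : ℂ)) / (ascPochhammer ℂ n).eval (1 + (ω : ℂ)))) *
        (((n - m).choose ℓ : ℂ) * (ascPochhammer ℂ ℓ).eval (-(ω : ℂ)) *
          (ascPochhammer ℂ (n - m - ℓ)).eval (1 + (ω : ℂ) + (m : ℂ))) := by
    intro ℓ hℓ
    have hℓN : ℓ ≤ n - m := Nat.lt_succ_iff.mp (mem_range.mp hℓ)
    have hℓn : ℓ ≤ n := by omega
    have hB := poch_den_ne ω hω n ℓ hℓn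
    have hsplitn : (ascPochhammer ℂ (n - ℓ)).eval (1 + (ω : ℂ))
        = (ascPochhammer ℂ m).eval (1 + (ω : ℂ)) *
          (ascPochhammer ℂ (n - m - ℓ)).eval (1 + (ω : ℂ) + (m : ℂ)) := by
      rw [show n - ℓ = m + (n - m - ℓ) by omega, poch_split_s10]
    have hrel : (ascPochhammer ℂ ℓ).eval (-(n : ℂ) - (ω : ℂ)) *
        (ascPochhammer ℂ (n - ℓ)).eval (1 + (ω : ℂ))
        = (-1) ^ ℓ * (ascPochhammer ℂ n).eval (1 + (ω : ℂ)) := by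
      rw [poch_reflect ω n ℓ hℓn]
      rw [show (ascPochhammer ℂ n).eval (1 + (ω : ℂ))
          = (ascPochhammer ℂ (n - ℓ)).eval (1 + (ω : ℂ)) *
            (ascPochhammer ℂ ℓ).eval (1 + (ω : ℂ) + ((n - ℓ : ℕ) : ℂ)) by
        rw [← poch_split_s10, show n - ℓ + ℓ = n by omega]]
      ring
    have h2 : (-1 : ℂ) ^ ℓ * (-1 : ℂ) ^ ℓ = 1 := by
      rw [← mul_pow]; norm_num
    have hAB : (ascPochhammer ℂ ℓ).eval (-(ω : ℂ)) / (ascPochhammer ℂ ℓ).eval (-(n : ℂ) - (ω : ℂ))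
        = (-1) ^ ℓ * ((ascPochhammer ℂ ℓ).eval (-(ω : ℂ)) *
            (ascPochhammer ℂ (n - ℓ)).eval (1 + (ω : ℂ))) /
          (ascPochhammer ℂ n).eval (1 + (ω : ℂ)) := by
      rw [div_eq_div_iff hB hPn]
      linear_combination (-((-1 : ℂ) ^ ℓ) * (ascPochhammer ℂ ℓ).eval (-(ω : ℂ))) * hrel +
        (-((ascPochhammer ℂ ℓ).eval (-(ω : ℂ)) * (ascPochhammer ℂ n).eval (1 + (ω : ℂ)))) * h2
    have hnat : (n.choose ℓ : ℂ) * (((n - ℓ).descFactorial m : ℕ) : ℂ)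
        = (n.descFactorial m : ℂ) * ((n - m).choose ℓ : ℂ) := by
      exact_mod_cast congrArg (Nat.cast : ℕ → ℂ) (natid n m ℓ hℓN hm)
    have hsgn : (-1 : ℂ) ^ ℓ * (-1 : ℂ) ^ (n - ℓ - m) = (-1 : ℂ) ^ (n - m) := by
      rw [← pow_add, show ℓ + (n - ℓ - m) = n - m by omega]
    rw [hAB, hsplitn]
    field_simp
    linear_combination
      ((ascPochhammer ℂ ℓ).eval (-(ω : ℂ)) * (ascPochhammer ℂ m).eval (1 + (ω : ℂ)) *
        (ascPochhammer ℂ (n - m - ℓ)).eval (1 + (ω : ℂ) + (m : ℂ)) *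
        ((-1 : ℂ) ^ ℓ * (-1 : ℂ) ^ (n - ℓ - m))) * hnat +
      ((ascPochhammer ℂ ℓ).eval (-(ω : ℂ)) * (ascPochhammer ℂ m).eval (1 + (ω : ℂ)) *
        (ascPochhammer ℂ (n - m - ℓ)).eval (1 + (ω : ℂ) + (m : ℂ)) *
        ((n.descFactorial m : ℂ) * (((n - m).choose ℓ : ℕ) : ℂ))) * hsgn
  rw [Finset.sum_congr rfl term, ← Finset.mul_sum]
  rw [← vand (-(ω : ℂ)) (1 + (ω : ℂ) + (m : ℂ)) (n - m)]
  rw [show -(ω : ℂ) + (1 + (ω : ℂ) + (m : ℂ)) = (m : ℂ) + 1 by ring]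
  have hfact : (m.factorial : ℂ) * (ascPochhammer ℂ (n - m)).eval ((m : ℂ) + 1)
      = (n.factorial : ℂ) := by
    have := factorial_mul_ascPochhammer ℂ m (n - m)
    rwa [show m + (n - m) = n by omega] at this
  have hdesc : (n.descFactorial m : ℂ) = (m.factorial : ℂ) * (n.choose m : ℂ) := by
    exact_mod_cast congrArg (Nat.cast : ℕ → ℂ) (Nat.descFactorial_eq_factorial_mul_choose n m)
  rw [hdesc]
  linear_combination ((-1 : ℂ) ^ (n - m) * (n.choose m : ℂ) *
    (ascPochhammer ℂ m).eval (1 + (ω : ℂ)) / (ascPochhammer ℂ n).eval (1 + (ω : ℂ))) * hfact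

noncomputable def skyP (n : ℕ) (ω : ℝ) : ℂ[X] :=
  ∑ ℓ ∈ Finset.range (n + 1),
    Polynomial.C ((n.choose ℓ : ℂ) *
      ((ascPochhammer ℂ ℓ).eval (-(ω : ℂ)) / (ascPochhammer ℂ ℓ).eval (-(n : ℂ) - (ω : ℂ)))) *
      X ^ (n - ℓ)

lemma skyburst_eq (n : ℕ) (ω : ℝ) : skyburst n ω = fun z => (skyP n ω).eval z := by
  funext z
  simp [skyburst, skyP, eval_finset_sum]

theorem skyburst_iteratedDeriv_at_neg_one (ω : ℝ) (hω : 0 < ω) (n : ℕ) (m : ℕ) (hm : m ≤ n) :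
    iteratedDeriv m (skyburst n ω) (-1) =
      (-1 : ℂ) ^ (n - m) * (n.factorial : ℂ) *
        ((ascPochhammer ℂ m).eval (1 + (ω : ℂ)) / (ascPochhammer ℂ n).eval (1 + (ω : ℂ))) *
        (n.choose m : ℂ) := by
  rw [skyburst_eq, iteratedDeriv_polyeval]
  rw [← key ω hω n m hm]
  simp only [skyP, Polynomial.iterate_derivative_sum, Polynomial.iterate_derivative_C_mul,
    Polynomial.iterate_derivative_X_pow_eq_natCast_mul, eval_finset_sum, eval_mul, eval_C,
    eval_pow, eval_natCast, eval_X]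
  refine Finset.sum_congr rfl fun ℓ _ => ?_
  ring
end

section
/- Let ω > 0 be a real number and n ∈ ℕ. Then for every z ∈ ℂ, S_n^ω(z) = ((−1)^n n!/(1+ω)_n) · Σ_{m=0}^n (−1)^m binom(n,m) ((1+ω)_m/m!) (1+z)^m; that is, S_n^ω(z) = ((−1)^n n!/(1+ω)_n) · ₂F₁(−n, 1+ω; 1; 1+z). -/
open Finset Polynomial

noncomputable def SkyP (j : ℕ) (x : ℝ) : ℝ := (ascPochhammer ℝ j).eval x

lemma P_zero (x : ℝ) : SkyP 0 x = 1 := by simp [SkyP]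
lemma P_succ_right (j : ℕ) (x : ℝ) : SkyP (j+1) x = SkyP j x * (x + j) := by
  simp [SkyP, ascPochhammer_succ_right, mul_comm, mul_add]
  ring
lemma P_succ_left (j : ℕ) (x : ℝ) : SkyP (j+1) x = x * SkyP j (x + 1) := by
  simp [SkyP, ascPochhammer_succ_left, eval_comp]
lemma P_pos {j : ℕ} {x : ℝ} (h : 0 < x) : 0 < SkyP j x := ascPochhammer_pos j x h
lemma P_add (k m : ℕ) (x : ℝ) : SkyP (k + m) x = SkyP k x * SkyP m (x + k) := by
  have := congrArg (Polynomial.eval x) (ascPochhammer_mul ℝ k m)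
  simpa [SkyP, eval_comp] using this.symm
lemma P_neg (j : ℕ) (x : ℝ) : SkyP j (-x) = (-1)^j * SkyP j (x - j + 1) := by
  induction j with
  | zero => simp [P_zero]
  | succ j ih =>
    rw [P_succ_right, ih, P_succ_left]
    push_cast
    ring_nf
lemma P_factorial (k j : ℕ) : ((k + j).factorial : ℝ) = (k.factorial : ℝ) * SkyP j (k + 1) := by
  induction j with
  | zero => simp [P_zero]
  | succ j ih =>
    rw [P_succ_right, show k + (j+1) = (k+j)+1 by ring, Nat.factorial_succ, Nat.cast_mul, ih]
    push_cast
    ring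

lemma skyCV : ∀ (N : ℕ) (b c : ℝ), 0 < c →
    ∑ j ∈ range (N+1), (-1)^j * (N.choose j : ℝ) * (SkyP j b / SkyP j c) = SkyP N (c - b) / SkyP N c := by
  intro N
  induction N with
  | zero => intro b c hc; simp [P_zero]
  | succ N ih =>
    intro b c hc
    have hc1 : (0:ℝ) < c + 1 := by linarith
    have hPc : SkyP N c ≠ 0 := (P_pos hc).ne'
    have hPc1 : SkyP N (c+1) ≠ 0 := (P_pos hc1).ne'
    have hsplit : ∀ j, (-1:ℝ)^(j+1) * ((N+1).choose (j+1) : ℝ) * (SkyP (j+1) b / SkyP (j+1) c)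
        = (-1)^(j+1) * (N.choose j : ℝ) * (SkyP (j+1) b / SkyP (j+1) c)
          + (-1)^(j+1) * (N.choose (j+1) : ℝ) * (SkyP (j+1) b / SkyP (j+1) c) := by
      intro j
      rw [Nat.choose_succ_succ]
      push_cast
      ring
    rw [Finset.sum_range_succ' _ (N+1)]
    simp only [hsplit]
    rw [Finset.sum_add_distrib]
    have e1 : ∑ j ∈ range (N+1), (-1:ℝ)^(j+1) * (N.choose j : ℝ) * (SkyP (j+1) b / SkyP (j+1) c)
        = -(b/c) * (SkyP N (c + 1 - (b+1)) / SkyP N (c+1)) := by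
      rw [← ih (b+1) (c+1) hc1, Finset.mul_sum]
      refine Finset.sum_congr rfl fun j _ => ?_
      rw [P_succ_left, P_succ_left]
      have : SkyP j (c+1) ≠ 0 := (P_pos (by linarith : (0:ℝ) < c+1)).ne'
      field_simp
      ring
    have e2 : (∑ j ∈ range (N+1), (-1:ℝ)^(j+1) * (N.choose (j+1) : ℝ) * (SkyP (j+1) b / SkyP (j+1) c))
        + (-1:ℝ)^0 * (((N+1).choose 0 : ℕ) : ℝ) * (SkyP 0 b / SkyP 0 c)
        = SkyP N (c - b) / SkyP N c := by
      rw [← ih b c hc]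
      have hg : ∑ j ∈ range (N+2), (-1:ℝ)^j * (N.choose j : ℝ) * (SkyP j b / SkyP j c)
          = ∑ j ∈ range (N+1), (-1:ℝ)^j * (N.choose j : ℝ) * (SkyP j b / SkyP j c) := by
        rw [Finset.sum_range_succ]
        simp [Nat.choose_succ_self]
      rw [← hg, Finset.sum_range_succ' (fun j => (-1:ℝ)^j * (N.choose j : ℝ) * (SkyP j b / SkyP j c)) (N+1)]
      simp
    rw [e1, add_assoc, e2]
    have hb1 : c + 1 - (b + 1) = c - b := by ring
    rw [hb1, P_succ_right, P_succ_right]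
    have h2 : SkyP N (c+1) = SkyP N c * (c + N) / c := by
      have := P_succ_left N c
      have := P_succ_right N c
      -- SkyP (N+1) c = c * SkyP N (c+1) = SkyP N c * (c + N)
      have h3 : c * SkyP N (c+1) = SkyP N c * (c + N) := by
        rw [← P_succ_left, P_succ_right]
      field_simp at h3 ⊢
      linarith [h3]
    rw [h2]
    have hcN : c + (N:ℝ) > 0 := by positivity
    field_simp
    ring

lemma sky_coeff_id (ω : ℝ) (hω : 0 < ω) (n k : ℕ) (hk : k ≤ n) :
    (n.choose k : ℝ) * (SkyP (n-k) (-ω) / SkyP (n-k) (-(n:ℝ) - ω))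
      = ((-1:ℝ)^n * n.factorial / SkyP n (1+ω)) *
        ∑ m ∈ range (n+1), (-1:ℝ)^m * (n.choose m : ℝ) * (SkyP m (1+ω) / m.factorial)
          * (m.choose k : ℝ) := by
  set N := n - k with hN
  have hn : n = k + N := by omega
  set g : ℕ → ℝ := fun m => (-1:ℝ)^m * (n.choose m : ℝ) * (SkyP m (1+ω) / m.factorial) * (m.choose k : ℝ) with hg
  have h1 : ∑ m ∈ range (n+1), g m = ∑ m ∈ range k, g m + ∑ j ∈ range (N+1), g (k+j) := by
    rw [show n + 1 = k + (N+1) by omega, Finset.sum_range_add]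
  have h2 : ∑ m ∈ range k, g m = 0 := by
    refine Finset.sum_eq_zero fun m hm => ?_
    have : m.choose k = 0 := Nat.choose_eq_zero_of_lt (Finset.mem_range.mp hm)
    simp [hg, this]
  have hterm : ∀ j, j ∈ range (N+1) → g (k+j)
      = ((-1:ℝ)^k * (n.choose k : ℝ) * (SkyP k (1+ω) / k.factorial))
        * ((-1:ℝ)^j * (N.choose j : ℝ) * (SkyP j (1+ω+k) / SkyP j (k+1))) := by
    intro j hj
    have hjN : j ≤ N := by simpa using Nat.lt_succ_iff.mp (Finset.mem_range.mp hj)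
    have hch : (n.choose (k+j) : ℝ) * ((k+j).choose k : ℝ) = (n.choose k : ℝ) * (N.choose j : ℝ) := by
      have := Nat.choose_mul (n := n) (k := k + j) (Nat.le_add_right k j)
      have h' : k + j - k = j := by omega
      rw [h'] at this
      exact_mod_cast congrArg (Nat.cast : ℕ → ℝ) this
    have hPa : SkyP (k+j) (1+ω) = SkyP k (1+ω) * SkyP j (1+ω+k) := by
      rw [P_add]
    have hF : ((k+j).factorial : ℝ) = k.factorial * SkyP j (k+1) := by
      rw [P_factorial]
    have hfk : (k.factorial : ℝ) ≠ 0 := by positivity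
    have hPj : SkyP j (k+1) ≠ 0 := (P_pos (by positivity)).ne'
    simp only [hg, pow_add, hPa, hF]
    field_simp
    linear_combination (SkyP k (1+ω) * SkyP j (1+ω+(k:ℝ))) * hch
  have h3 : ∑ j ∈ range (N+1), g (k+j)
      = ((-1:ℝ)^k * (n.choose k : ℝ) * (SkyP k (1+ω) / k.factorial)) * (SkyP N (-ω) / SkyP N (k+1)) := by
    rw [Finset.sum_congr rfl hterm, ← Finset.mul_sum, skyCV N (1+ω+k) (k+1) (by positivity)]
    have : (k:ℝ) + 1 - (1+ω+k) = -ω := by ring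
    rw [this]
  have hPneg : SkyP N (-(n:ℝ) - ω) = (-1:ℝ)^N * SkyP N (1+ω+k) := by
    have : -(n:ℝ) - ω = -((n:ℝ) + ω) := by ring
    rw [this, P_neg]
    have : (n:ℝ) + ω - N + 1 = 1 + ω + k := by rw [hn]; push_cast; ring
    rw [this]
  have hPn : SkyP n (1+ω) = SkyP k (1+ω) * SkyP N (1+ω+k) := by
    rw [hn, P_add]
  have hfn : (n.factorial : ℝ) = k.factorial * SkyP N (k+1) := by
    rw [hn, P_factorial]
  rw [h1, h2, zero_add, h3, hPneg, hPn, hfn, hn]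
  have hA : SkyP N (1+ω+k) ≠ 0 := (P_pos (by positivity)).ne'
  have hB : SkyP N ((k:ℝ)+1) ≠ 0 := (P_pos (by positivity)).ne'
  have hC : SkyP k (1+ω) ≠ 0 := (P_pos (by positivity)).ne'
  have hD : (k.factorial : ℝ) ≠ 0 := by positivity
  rw [pow_add]
  field_simp
  ring_nf
  rw [pow_mul', pow_mul', neg_one_sq, one_pow, one_pow, mul_one, mul_one]

lemma P_castC (j : ℕ) (x : ℝ) : ((SkyP j x : ℝ) : ℂ) = (ascPochhammer ℂ j).eval (x : ℂ) := by
  rw [SkyP, ← ascPochhammer_map (algebraMap ℝ ℂ) j, eval_map]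
  exact (eval₂_at_apply (algebraMap ℝ ℂ) x).symm

theorem skyburst_hypergeometric_form (ω : ℝ) (hω : 0 < ω) (n : ℕ) (z : ℂ) :
    skyburst n ω z =
      ((-1 : ℂ) ^ n * (n.factorial : ℂ) / (ascPochhammer ℂ n).eval (1 + (ω : ℂ))) *
        ∑ m ∈ Finset.range (n + 1),
          (-1 : ℂ) ^ m * (n.choose m : ℂ) *
            ((ascPochhammer ℂ m).eval (1 + (ω : ℂ)) / (m.factorial : ℂ)) * (1 + z) ^ m := by
  have expand : ∀ m, m ≤ n → (1 + z)^m = ∑ k ∈ range (n+1), (m.choose k : ℂ) * z^k := by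
    intro m hm
    have hsub : ∑ k ∈ range (m+1), (m.choose k : ℂ) * z^k
        = ∑ k ∈ range (n+1), (m.choose k : ℂ) * z^k := by
      apply Finset.sum_subset
      · intro x hx; simp at hx ⊢; omega
      · intro x hx hnx
        simp only [Finset.mem_range, Nat.lt_succ_iff, not_le] at hx hnx
        rw [Nat.choose_eq_zero_of_lt (by omega)]
        simp
    rw [← hsub, add_comm, add_pow]
    exact Finset.sum_congr rfl fun k _ => by simp [mul_comm]
  set A : ℂ := ((-1 : ℂ) ^ n * (n.factorial : ℂ) / (ascPochhammer ℂ n).eval (1 + (ω : ℂ))) with hA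
  rw [Finset.mul_sum]
  have step1 : ∀ m ∈ range (n+1),
      A * ((-1:ℂ)^m * (n.choose m : ℂ) * ((ascPochhammer ℂ m).eval (1+(ω:ℂ)) / (m.factorial : ℂ)) * (1+z)^m)
      = ∑ k ∈ range (n+1), A * ((-1:ℂ)^m * (n.choose m : ℂ) * ((ascPochhammer ℂ m).eval (1+(ω:ℂ)) / (m.factorial : ℂ)) * (m.choose k : ℂ)) * z^k := by
    intro m hm
    rw [expand m (by simpa [Nat.lt_succ_iff] using hm), Finset.mul_sum, Finset.mul_sum]
    exact Finset.sum_congr rfl fun k _ => by ring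
  rw [Finset.sum_congr rfl step1, Finset.sum_comm]
  unfold skyburst
  rw [← Finset.sum_range_reflect]
  refine Finset.sum_congr rfl fun k hk => ?_
  have hkn : k ≤ n := by simpa [Nat.lt_succ_iff] using hk
  simp only [Nat.add_sub_cancel]
  rw [show n - (n - k) = k by omega, ← Finset.sum_mul, Nat.choose_symm hkn]
  congr 1
  have key := sky_coeff_id ω hω n k hkn
  have keyC := congrArg (fun r : ℝ => (r : ℂ)) key
  simp only [Complex.ofReal_mul, Complex.ofReal_div, Complex.ofReal_sum, Complex.ofReal_pow,
    Complex.ofReal_neg, Complex.ofReal_one, Complex.ofReal_natCast, P_castC,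
    Complex.ofReal_add] at keyC
  push_cast at keyC
  rw [keyC, Finset.mul_sum]
end

section
/- Let ω > 0 be a real number and n ∈ ℕ. Then for every z ∈ ℂ, ((2+ω)_n/n!)·S_n^{ω+1}(z) = ((1+ω)_n/n!)·S_n^ω(z) + (1+z)·Σ_{ℓ=0}^{n−1} ((1+ω)_ℓ/ℓ!) z^{n−ℓ−1} S_ℓ^ω(z). -/
open Finset Polynomial

lemma asc_eval_ofReal (ℓ : ℕ) (x : ℝ) :
    (ascPochhammer ℂ ℓ).eval (x : ℂ) = (((ascPochhammer ℝ ℓ).eval x : ℝ) : ℂ) := by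
  rw [← ascPochhammer_map (algebraMap ℝ ℂ), eval_map]
  exact eval₂_at_apply (algebraMap ℝ ℂ) x

lemma asc_eval_pos_ne (ℓ : ℕ) {x : ℝ} (hx : 0 < x) :
    (ascPochhammer ℂ ℓ).eval (x : ℂ) ≠ 0 := by
  rw [asc_eval_ofReal]
  exact_mod_cast (ascPochhammer_pos ℓ x hx).ne'

lemma asc_succ_eval_left (n : ℕ) (x : ℂ) :
    (ascPochhammer ℂ (n + 1)).eval x = x * (ascPochhammer ℂ n).eval (x + 1) := by
  rw [ascPochhammer_succ_left, eval_mul, eval_X, eval_comp, eval_add, eval_X, eval_one]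

lemma asc_eval_neg (ℓ : ℕ) (y : ℂ) :
    (ascPochhammer ℂ ℓ).eval (-y) = (-1) ^ ℓ * (ascPochhammer ℂ ℓ).eval (y - ℓ + 1) := by
  induction ℓ generalizing y with
  | zero => simp
  | succ ℓ ih =>
    rw [ascPochhammer_succ_eval, ih, show (y - (ℓ+1 : ℕ) + 1 : ℂ) = (y - ℓ) by
      push_cast; ring, asc_succ_eval_left, show (y - ℓ + 1 : ℂ) = y - ℓ + 1 from rfl]
    push_cast
    ring

lemma coeff_closed (x : ℝ) (hx : 0 < x) {n ℓ : ℕ} (h : ℓ ≤ n) (z : ℂ) :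
    ((ascPochhammer ℂ n).eval (1 + (x : ℂ)) / (n.factorial : ℂ)) *
      ((n.choose ℓ : ℂ) *
        ((ascPochhammer ℂ ℓ).eval (-(x : ℂ)) / (ascPochhammer ℂ ℓ).eval (-(n : ℂ) - (x : ℂ))) *
        z ^ (n - ℓ)) =
    (n.choose ℓ : ℂ) / (n.factorial : ℂ) * (ascPochhammer ℂ ℓ).eval ((x : ℂ) - ℓ + 1) *
      (ascPochhammer ℂ (n - ℓ)).eval (1 + (x : ℂ)) * z ^ (n - ℓ) := by
  set D : ℂ := ((n - ℓ : ℕ) : ℂ) + (1 + x) with hD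
  have hden : (ascPochhammer ℂ ℓ).eval (-(n : ℂ) - (x : ℂ)) =
      (-1) ^ ℓ * (ascPochhammer ℂ ℓ).eval D := by
    rw [show (-(n : ℂ) - x) = -((n : ℂ) + x) by ring, asc_eval_neg]
    congr 2
    rw [hD, Nat.cast_sub h]
    ring
  have hne : (ascPochhammer ℂ ℓ).eval D ≠ 0 := by
    have h2 := asc_eval_pos_ne (x := (n - ℓ : ℕ) + (1 + x)) ℓ (by positivity)
    have : (((n - ℓ : ℕ) + (1 + x) : ℝ) : ℂ) = D := by rw [hD]; push_cast; ring
    rwa [this] at h2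
  have hneg : ((-1 : ℂ)) ^ ℓ ≠ 0 := by simp
  have hsplit : (ascPochhammer ℂ n).eval (1 + (x : ℂ)) =
      (ascPochhammer ℂ (n - ℓ)).eval (1 + (x : ℂ)) * (ascPochhammer ℂ ℓ).eval D := by
    have hm := congrArg (Polynomial.eval (1 + (x : ℂ))) (ascPochhammer_mul (S := ℂ) (n - ℓ) ℓ)
    rw [Nat.sub_add_cancel h] at hm
    rw [← hm, eval_mul, eval_comp, eval_add, eval_X, eval_natCast,
      add_comm (1 + (x : ℂ)) ((n - ℓ : ℕ) : ℂ)]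
  have hr : (ascPochhammer ℂ ℓ).eval (-(x : ℂ)) / (ascPochhammer ℂ ℓ).eval (-(n : ℂ) - (x : ℂ)) =
      (ascPochhammer ℂ ℓ).eval ((x : ℂ) - ℓ + 1) / (ascPochhammer ℂ ℓ).eval D := by
    rw [hden, asc_eval_neg, mul_div_mul_left _ _ hneg]
  have hfac : (n.factorial : ℂ) ≠ 0 := by exact_mod_cast n.factorial_ne_zero
  rw [hr, hsplit]
  field_simp

lemma Frec1 (j : ℕ) (w : ℂ) :
    (ascPochhammer ℂ (j+1)).eval ((w+1) - ((j+1 : ℕ) : ℂ) + 1) =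
      (w+1) * (ascPochhammer ℂ j).eval (w - j + 1) := by
  rw [show ((w+1) - ((j+1 : ℕ) : ℂ) + 1) = w - j + 1 by push_cast; ring,
    ascPochhammer_succ_eval]
  push_cast; ring

lemma Frec2 (j : ℕ) (w : ℂ) :
    (ascPochhammer ℂ (j+1)).eval (w - ((j+1 : ℕ) : ℂ) + 1) =
      (w - j) * (ascPochhammer ℂ j).eval (w - j + 1) := by
  rw [show (w - ((j+1 : ℕ) : ℂ) + 1) = w - j by push_cast; ring, asc_succ_eval_left]

lemma Qrec (m : ℕ) (w : ℂ) :
    (ascPochhammer ℂ (m+1)).eval (1 + w) = (1 + w) * (ascPochhammer ℂ m).eval (1 + (w+1)) := by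
  rw [asc_succ_eval_left, show (1 + w + 1 : ℂ) = 1 + (w+1) by ring]

lemma Prec (m : ℕ) (w : ℂ) :
    (ascPochhammer ℂ (m+1)).eval (1 + (w+1)) =
      (ascPochhammer ℂ m).eval (1 + (w+1)) * (2 + w + m) := by
  rw [ascPochhammer_succ_eval]; ring

lemma mul_skyburst (x : ℝ) (hx : 0 < x) (n : ℕ) (z : ℂ) :
    ((ascPochhammer ℂ n).eval (1 + (x : ℂ)) / (n.factorial : ℂ)) * skyburst n x z =
      ∑ ℓ ∈ Finset.range (n+1), (n.choose ℓ : ℂ) / (n.factorial : ℂ) *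
        (ascPochhammer ℂ ℓ).eval ((x : ℂ) - ℓ + 1) *
        (ascPochhammer ℂ (n-ℓ)).eval (1 + (x : ℂ)) * z ^ (n-ℓ) := by
  unfold skyburst
  rw [Finset.mul_sum]
  exact Finset.sum_congr rfl fun ℓ hℓ =>
    coeff_closed x hx (Nat.lt_succ_iff.mp (Finset.mem_range.mp hℓ)) z

lemma key_s12 (ω : ℝ) (hω : 0 < ω) (n : ℕ) (z : ℂ) :
    ((ascPochhammer ℂ (n+1)).eval (1 + ((ω:ℂ)+1)) / ((n+1).factorial : ℂ)) *
        skyburst (n+1) (ω+1) z =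
      z * (((ascPochhammer ℂ n).eval (1 + ((ω:ℂ)+1)) / (n.factorial : ℂ)) *
        skyburst n (ω+1) z) +
      ((ascPochhammer ℂ (n+1)).eval (1 + (ω : ℂ)) / ((n+1).factorial : ℂ)) *
        skyburst (n+1) ω z +
      ((ascPochhammer ℂ n).eval (1 + (ω : ℂ)) / (n.factorial : ℂ)) * skyburst n ω z := by
  have hω1 : (0:ℝ) < ω + 1 := by linarith
  have hcast : ((ω + 1 : ℝ) : ℂ) = (ω : ℂ) + 1 := by push_cast; ring
  rw [show (1 + ((ω:ℂ)+1)) = 1 + ((ω+1:ℝ):ℂ) by rw [hcast]] -- both occurrences?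
  rw [mul_skyburst (ω+1) hω1 (n+1) z, mul_skyburst (ω+1) hω1 n z,
      mul_skyburst ω hω (n+1) z, mul_skyburst ω hω n z, hcast]
  have hfac : (n.factorial : ℂ) ≠ 0 := by exact_mod_cast n.factorial_ne_zero
  have hfs : (((n+1).factorial : ℕ) : ℂ) = (n+1) * (n.factorial : ℂ) := by
    push_cast [Nat.factorial_succ]; ring
  have hb : z * ∑ ℓ ∈ Finset.range (n + 1),
        (n.choose ℓ : ℂ) / (n.factorial : ℂ) *
          Polynomial.eval ((ω:ℂ) + 1 - ℓ + 1) (ascPochhammer ℂ ℓ) *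
          Polynomial.eval (1 + ((ω:ℂ) + 1)) (ascPochhammer ℂ (n - ℓ)) * z ^ (n - ℓ) =
      ∑ ℓ ∈ Finset.range (n + 1 + 1),
        (n.choose ℓ : ℂ) / (n.factorial : ℂ) *
          Polynomial.eval ((ω:ℂ) + 1 - ℓ + 1) (ascPochhammer ℂ ℓ) *
          Polynomial.eval (1 + ((ω:ℂ) + 1)) (ascPochhammer ℂ (n - ℓ)) * z ^ (n + 1 - ℓ) := by
    conv_rhs => rw [Finset.sum_range_succ]
    rw [Finset.mul_sum]
    simp only [Nat.choose_succ_self, Nat.cast_zero, zero_div, zero_mul, add_zero]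
    refine Finset.sum_congr rfl fun ℓ hℓ => ?_
    have h : ℓ ≤ n := Nat.lt_succ_iff.mp (Finset.mem_range.mp hℓ)
    rw [show n + 1 - ℓ = (n - ℓ) + 1 by omega, pow_succ]
    ring
  have hd : (∑ ℓ ∈ Finset.range (n + 1),
        (n.choose ℓ : ℂ) / (n.factorial : ℂ) *
          Polynomial.eval ((ω:ℂ) - ℓ + 1) (ascPochhammer ℂ ℓ) *
          Polynomial.eval (1 + (ω:ℂ)) (ascPochhammer ℂ (n - ℓ)) * z ^ (n - ℓ)) =
      ∑ ℓ ∈ Finset.range (n + 1 + 1),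
        (match ℓ with
          | 0 => (0 : ℂ)
          | j+1 => (n.choose j : ℂ) / (n.factorial : ℂ) *
              Polynomial.eval ((ω:ℂ) - j + 1) (ascPochhammer ℂ j) *
              Polynomial.eval (1 + (ω:ℂ)) (ascPochhammer ℂ (n - j)) * z ^ (n - j)) := by
    conv_rhs => rw [Finset.sum_range_succ']
    simp
  rw [hb, hd, ← Finset.sum_add_distrib, ← Finset.sum_add_distrib]
  refine Finset.sum_congr rfl fun ℓ hℓ => ?_
  have hℓn : ℓ ≤ n + 1 := Nat.lt_succ_iff.mp (Finset.mem_range.mp hℓ)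
  match ℓ, hℓn with
  | 0, _ =>
    simp only [Nat.sub_zero, Nat.choose_zero_right, Nat.cast_one, Nat.cast_zero,
      ascPochhammer_zero, Polynomial.eval_one, add_zero]
    rw [Prec n (ω:ℂ), Qrec n (ω:ℂ), hfs]
    have h1 : ((n:ℂ) + 1) ≠ 0 := by exact_mod_cast Nat.cast_add_one_ne_zero (R := ℂ) n
    field_simp
    ring
  | j+1, hj =>
    have hjn : j ≤ n := by omega
    rw [Frec1 j (ω:ℂ), Frec2 j (ω:ℂ)]
    simp only [Nat.succ_sub_succ_eq_sub]
    rcases eq_or_lt_of_le hjn with hje | hjl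
    · subst hje
      simp only [Nat.sub_self, Nat.choose_succ_self, Nat.cast_zero, zero_div, zero_mul,
        Nat.choose_self, Nat.cast_one, ascPochhammer_zero, Polynomial.eval_one,
        pow_zero, zero_add, mul_one, one_div]
      rw [hfs]
      have h1 : ((j:ℂ) + 1) ≠ 0 := by exact_mod_cast Nat.cast_add_one_ne_zero (R := ℂ) j
      field_simp
      ring
    · obtain ⟨m, hm⟩ : ∃ m, n - j = m + 1 := ⟨n - j - 1, by omega⟩
      have hm' : n - (j+1) = m := by omega
      rw [hm, hm', Prec m (ω:ℂ), Qrec m (ω:ℂ)]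
      have hc : (((n+1).choose (j+1) : ℕ) : ℂ) = (n.choose j : ℂ) + (n.choose (j+1) : ℂ) := by
        rw [Nat.choose_succ_succ]; push_cast; ring
      have hmc : (m : ℂ) = (n : ℂ) - j - 1 := by
        have h2 : ((n - j : ℕ) : ℂ) = ((m + 1 : ℕ) : ℂ) := by
          exact_mod_cast congrArg (fun t : ℕ => (t : ℂ)) hm
        rw [Nat.cast_sub hjn] at h2
        push_cast at h2
        linear_combination -h2
      rw [hc, hmc, hfs]
      have h1 : ((n:ℂ) + 1) ≠ 0 := by exact_mod_cast Nat.cast_add_one_ne_zero (R := ℂ) n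
      field_simp
      ring

theorem skyburst_lifting_recurrence (ω : ℝ) (hω : 0 < ω) (n : ℕ) (z : ℂ) :
    ((ascPochhammer ℂ n).eval (2 + (ω : ℂ)) / (n.factorial : ℂ)) * skyburst n (ω + 1) z =
      ((ascPochhammer ℂ n).eval (1 + (ω : ℂ)) / (n.factorial : ℂ)) * skyburst n ω z +
        (1 + z) *
          ∑ ℓ ∈ Finset.range n,
            ((ascPochhammer ℂ ℓ).eval (1 + (ω : ℂ)) / (ℓ.factorial : ℂ)) *
              z ^ (n - ℓ - 1) * skyburst ℓ ω z := by
  induction n with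
  | zero => simp [skyburst]
  | succ n ih =>
    have hkey := key_s12 ω hω n z
    rw [show (1 + ((ω:ℂ)+1)) = 2 + (ω:ℂ) by ring] at hkey
    rw [Finset.sum_range_succ]
    have hsum : (∑ ℓ ∈ Finset.range n,
        ((ascPochhammer ℂ ℓ).eval (1 + (ω : ℂ)) / (ℓ.factorial : ℂ)) *
          z ^ (n + 1 - ℓ - 1) * skyburst ℓ ω z) =
        z * ∑ ℓ ∈ Finset.range n,
        ((ascPochhammer ℂ ℓ).eval (1 + (ω : ℂ)) / (ℓ.factorial : ℂ)) *
          z ^ (n - ℓ - 1) * skyburst ℓ ω z := by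
      rw [Finset.mul_sum]
      refine Finset.sum_congr rfl fun ℓ hℓ => ?_
      have h : ℓ < n := Finset.mem_range.mp hℓ
      rw [show n + 1 - ℓ - 1 = (n - ℓ - 1) + 1 by omega, pow_succ]
      ring
    rw [hsum, show n + 1 - n - 1 = 0 by omega, pow_zero]
    linear_combination hkey + z * ih
end

section
/- Let ω > 0 be a real number and n ∈ ℕ. Then for every z ∈ ℂ, ((ω)_n/n!)·S_n^{ω−1}(z) = ((1+ω)_n/n!)·S_n^ω(z) + (1+z)·Σ_{ℓ=0}^{n−1} (−1)^{n−ℓ} ((1+ω)_ℓ/ℓ!) S_ℓ^ω(z). -/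
open Finset Polynomial

lemma asc_succ_left_eval (n : ℕ) (x : ℂ) :
    (ascPochhammer ℂ (n+1)).eval x = x * (ascPochhammer ℂ n).eval (x+1) := by
  rw [ascPochhammer_succ_left]
  simp [Polynomial.eval_comp]

lemma asc_pred_eval (n : ℕ) (x : ℂ) :
    (ascPochhammer ℂ (n+1)).eval (x-1) = (x-1) * (ascPochhammer ℂ n).eval x := by
  rw [asc_succ_left_eval, sub_add_cancel]

noncomputable def co (μ : ℂ) (n ℓ : ℕ) : ℂ :=
  (ascPochhammer ℂ n).eval (μ - ℓ) / ((ℓ.factorial : ℂ) * ((n - ℓ).factorial : ℂ))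

noncomputable def F (μ : ℂ) (n : ℕ) (z : ℂ) : ℂ :=
  ∑ ℓ ∈ Finset.range (n+1), co μ n ℓ * z ^ (n - ℓ)

lemma fact_ne (m : ℕ) : ((m.factorial : ℂ)) ≠ 0 := by
  exact_mod_cast Nat.cast_ne_zero.mpr m.factorial_ne_zero


lemma fact_succ_c (m : ℕ) : ((m+1).factorial : ℂ) = ((m:ℂ)+1) * (m.factorial : ℂ) := by
  push_cast [Nat.factorial_succ]; ring

lemma edge0 (μ : ℂ) (n : ℕ) : co (μ+1) (n+1) 0 = co μ (n+1) 0 + co (μ+1) n 0 := by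
  simp only [co, Nat.cast_zero, sub_zero, Nat.sub_zero, Nat.factorial_zero, Nat.cast_one, one_mul]
  have h1 : (ascPochhammer ℂ (n+1)).eval μ = (μ + 1 - 1) * (ascPochhammer ℂ n).eval (μ+1) := by
    have := asc_pred_eval n (μ+1); rw [add_sub_cancel_right] at this
    rw [this]; ring
  have h2 : (ascPochhammer ℂ (n+1)).eval (μ+1) = (ascPochhammer ℂ n).eval (μ+1) * (μ+1+n) :=
    ascPochhammer_succ_eval n (μ+1)
  rw [h1, h2]
  rw [fact_succ_c]
  have hn1 : (n:ℂ) + 1 ≠ 0 := by exact_mod_cast Nat.succ_ne_zero n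
  have hf := fact_ne n
  field_simp
  ring

lemma edgeT (μ : ℂ) (n : ℕ) : co (μ+1) (n+1) (n+1) = co μ (n+1) (n+1) + co μ n n := by
  simp only [co, Nat.sub_self, Nat.factorial_zero, Nat.cast_one, mul_one]
  push_cast
  have e1 : μ + 1 - ((n:ℂ)+1) = μ - n := by ring
  have e2 : μ - ((n:ℂ)+1) = (μ - n) - 1 := by ring
  rw [e1, e2, asc_pred_eval n (μ - n), ascPochhammer_succ_eval n (μ - n)]
  rw [fact_succ_c]
  have hn1 : (n:ℂ) + 1 ≠ 0 := by exact_mod_cast Nat.succ_ne_zero n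
  have hf := fact_ne n
  field_simp
  ring

lemma key_co (μ : ℂ) (ℓ k : ℕ) :
    co (μ+1) (ℓ+k+2) (ℓ+1) =
      co μ (ℓ+k+2) (ℓ+1) + co μ (ℓ+k+1) ℓ + co (μ+1) (ℓ+k+1) (ℓ+1) := by
  have s1 : ℓ + k + 2 - (ℓ + 1) = k + 1 := by omega
  have s2 : ℓ + k + 1 - ℓ = k + 1 := by omega
  have s3 : ℓ + k + 1 - (ℓ + 1) = k := by omega
  simp only [co, s1, s2, s3]
  push_cast
  have e1 : μ + 1 - ((ℓ:ℂ)+1) = μ - ℓ := by ring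
  have e2 : μ - ((ℓ:ℂ)+1) = (μ - ℓ) - 1 := by ring
  rw [e1, e2, asc_pred_eval (ℓ+k+1) (μ - ℓ), show ((ℓ:ℕ)+k+2) = (ℓ+k+1)+1 from rfl,
    ascPochhammer_succ_eval (ℓ+k+1) (μ - ℓ)]
  rw [fact_succ_c ℓ, fact_succ_c k]
  have hl1 : (ℓ:ℂ) + 1 ≠ 0 := by exact_mod_cast Nat.succ_ne_zero ℓ
  have hk1 : (k:ℂ) + 1 ≠ 0 := by exact_mod_cast Nat.succ_ne_zero k
  have hfl := fact_ne ℓ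
  have hfk := fact_ne k
  field_simp
  push_cast
  ring

lemma Fstep (μ : ℂ) (n : ℕ) (z : ℂ) :
    F (μ+1) (n+1) z = F μ (n+1) z + F μ n z + z * F (μ+1) n z := by
  have hS3 : z * F (μ+1) n z = ∑ ℓ ∈ Finset.range (n+1), co (μ+1) n ℓ * z^(n+1-ℓ) := by
    rw [F, Finset.mul_sum]
    refine Finset.sum_congr rfl fun ℓ hℓ => ?_
    have hl : ℓ ≤ n := by simpa [Nat.lt_succ_iff] using hℓ
    have : n + 1 - ℓ = (n - ℓ) + 1 := by omega
    rw [this, pow_succ]; ring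
  rw [hS3, F, F, F]
  rw [Finset.sum_range_succ' (fun ℓ => co (μ+1) (n+1) ℓ * z ^ (n+1-ℓ)) (n+1),
      Finset.sum_range_succ' (fun ℓ => co μ (n+1) ℓ * z ^ (n+1-ℓ)) (n+1),
      Finset.sum_range_succ' (fun ℓ => co (μ+1) n ℓ * z ^ (n+1-ℓ)) n]
  simp only [Nat.add_sub_add_right, Nat.sub_zero]
  rw [Finset.sum_range_succ (fun ℓ => co (μ+1) (n+1) (ℓ+1) * z ^ (n-ℓ)) n,
      Finset.sum_range_succ (fun ℓ => co μ (n+1) (ℓ+1) * z ^ (n-ℓ)) n,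
      Finset.sum_range_succ (fun ℓ => co μ n ℓ * z ^ (n-ℓ)) n]
  have hmain : ∑ ℓ ∈ Finset.range n, co (μ+1) (n+1) (ℓ+1) * z ^ (n-ℓ)
      = ∑ ℓ ∈ Finset.range n, (co μ (n+1) (ℓ+1) * z ^ (n-ℓ)
          + co μ n ℓ * z ^ (n-ℓ) + co (μ+1) n (ℓ+1) * z ^ (n-ℓ)) := by
    refine Finset.sum_congr rfl fun ℓ hℓ => ?_
    have hl := Finset.mem_range.mp hℓ
    obtain ⟨k, rfl⟩ : ∃ k, n = ℓ + k + 1 := ⟨n - ℓ - 1, by omega⟩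
    rw [key_co μ ℓ k]; ring
  rw [hmain, Finset.sum_add_distrib, Finset.sum_add_distrib, edgeT μ n, edge0 μ n,
    Nat.sub_self]
  ring

lemma asc_two (n : ℕ) (y : ℂ) :
    y * (ascPochhammer ℂ n).eval (y+1) = (ascPochhammer ℂ n).eval y * (y + n) := by
  rw [← asc_succ_left_eval, ascPochhammer_succ_eval]

lemma pochid (μ : ℂ) (n : ℕ) : ∀ ℓ : ℕ,
    (ascPochhammer ℂ n).eval (1+μ) * (ascPochhammer ℂ ℓ).eval (-μ)
      = (ascPochhammer ℂ n).eval (μ+1-ℓ) * (ascPochhammer ℂ ℓ).eval (-(n:ℂ)-μ) := by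
  intro ℓ
  induction ℓ with
  | zero =>
      simp only [Nat.cast_zero, sub_zero, ascPochhammer_zero, Polynomial.eval_one, mul_one]
      rw [add_comm]
  | succ ℓ ih =>
      rw [ascPochhammer_succ_eval ℓ (-μ), ascPochhammer_succ_eval ℓ (-(n:ℂ)-μ)]
      have e1 : μ + 1 - (((ℓ:ℕ)+1: ℕ) : ℂ) = μ - ℓ := by push_cast; ring
      rw [e1]
      have hb : (μ - ℓ) * (ascPochhammer ℂ n).eval (μ - ℓ + 1)
          = (ascPochhammer ℂ n).eval (μ - ℓ) * (μ - ℓ + n) := asc_two n (μ - ℓ)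
      have e2 : μ - (ℓ:ℂ) + 1 = μ + 1 - ℓ := by ring
      rw [e2] at hb
      linear_combination ((ℓ:ℂ) - μ) * ih - ((ascPochhammer ℂ ℓ).eval (-(n:ℂ)-μ)) * hb

lemma asc_ne (μ : ℝ) (hμ : -1 < μ) (n : ℕ) : ∀ ℓ : ℕ, ℓ ≤ n →
    (ascPochhammer ℂ ℓ).eval (-(n:ℂ) - (μ:ℂ)) ≠ 0 := by
  intro ℓ
  induction ℓ with
  | zero => intro _; simp [ascPochhammer_zero]
  | succ ℓ ih =>
      intro h
      rw [ascPochhammer_succ_eval]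
      refine mul_ne_zero (ih (by omega)) ?_
      intro hc
      have := congrArg Complex.re hc
      simp [Complex.add_re, Complex.sub_re, Complex.neg_re] at this
      have hln : (ℓ:ℝ) + 1 ≤ (n:ℝ) := by exact_mod_cast h
      linarith



lemma skyburst_eq_s13 (μ : ℝ) (hμ : -1 < μ) (n : ℕ) (z : ℂ) :
    ((ascPochhammer ℂ n).eval (1 + (μ:ℂ)) / (n.factorial : ℂ)) * skyburst n μ z
      = F ((μ:ℂ)+1) n z := by
  rw [skyburst, F, Finset.mul_sum]
  refine Finset.sum_congr rfl fun ℓ hℓ => ?_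
  have hl : ℓ ≤ n := by simpa [Nat.lt_succ_iff] using hℓ
  rw [co]
  rw [show (μ:ℂ) + 1 - ℓ = μ + 1 - ℓ from rfl]
  have hne := asc_ne μ hμ n ℓ hl
  have hch : ((n.choose ℓ : ℕ) : ℂ) * ℓ.factorial * (n-ℓ).factorial = n.factorial := by
    exact_mod_cast congrArg (Nat.cast : ℕ → ℂ) (Nat.choose_mul_factorial_mul_factorial hl)
  have hp := pochid (μ:ℂ) n ℓ
  have hf1 := fact_ne n
  have hf2 := fact_ne ℓ
  have hf3 := fact_ne (n-ℓ)
  field_simp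
  linear_combination (z ^ (n - ℓ) * ((n.choose ℓ : ℂ) * ℓ.factorial * (n-ℓ).factorial)) * hp
    + (z ^ (n-ℓ) * ((ascPochhammer ℂ n).eval ((μ:ℂ)+1-ℓ)) * (ascPochhammer ℂ ℓ).eval (-(n:ℂ)-μ)) * hch

lemma Fmain (μ : ℂ) (n : ℕ) (z : ℂ) :
    F μ n z = F (μ+1) n z + (1+z) * ∑ ℓ ∈ Finset.range n, (-1:ℂ)^(n-ℓ) * F (μ+1) ℓ z := by
  induction n with
  | zero => simp [F, co]
  | succ n ih =>
      have hstep := Fstep μ n z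
      rw [Finset.sum_range_succ]
      have hU : ∑ ℓ ∈ Finset.range n, (-1:ℂ)^(n+1-ℓ) * F (μ+1) ℓ z
          = -∑ ℓ ∈ Finset.range n, (-1:ℂ)^(n-ℓ) * F (μ+1) ℓ z := by
        rw [← Finset.sum_neg_distrib]
        refine Finset.sum_congr rfl fun ℓ hℓ => ?_
        have hl := Finset.mem_range.mp hℓ
        rw [show n + 1 - ℓ = (n - ℓ) + 1 by omega, pow_succ]
        ring
      rw [hU, show n + 1 - n = 1 by omega, pow_one]
      linear_combination -hstep - ih

theorem skyburst_lowering_recurrence (ω : ℝ) (hω : 0 < ω) (n : ℕ) (z : ℂ) :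
    ((ascPochhammer ℂ n).eval (ω : ℂ) / (n.factorial : ℂ)) * skyburst n (ω - 1) z =
      ((ascPochhammer ℂ n).eval (1 + (ω : ℂ)) / (n.factorial : ℂ)) * skyburst n ω z +
        (1 + z) *
          ∑ ℓ ∈ Finset.range n,
            (-1 : ℂ) ^ (n - ℓ) *
              ((ascPochhammer ℂ ℓ).eval (1 + (ω : ℂ)) / (ℓ.factorial : ℂ)) *
              skyburst ℓ ω z := by
  have hA : ((ascPochhammer ℂ n).eval (ω : ℂ) / (n.factorial : ℂ)) * skyburst n (ω - 1) z
      = F (ω : ℂ) n z := by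
    have h := skyburst_eq_s13 (ω - 1) (by linarith) n z
    push_cast at h
    rw [show (1:ℂ) + ((ω:ℂ) - 1) = (ω:ℂ) by ring, show ((ω:ℂ) - 1) + 1 = (ω:ℂ) by ring] at h
    exact h
  have hB : ∀ m : ℕ, ((ascPochhammer ℂ m).eval (1 + (ω : ℂ)) / (m.factorial : ℂ))
      * skyburst m ω z = F ((ω:ℂ)+1) m z := fun m => skyburst_eq_s13 ω (by linarith) m z
  rw [hA, hB n]
  have hsum : ∑ ℓ ∈ Finset.range n, (-1 : ℂ) ^ (n - ℓ) *
        ((ascPochhammer ℂ ℓ).eval (1 + (ω : ℂ)) / (ℓ.factorial : ℂ)) * skyburst ℓ ω z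
      = ∑ ℓ ∈ Finset.range n, (-1:ℂ)^(n-ℓ) * F ((ω:ℂ)+1) ℓ z := by
    refine Finset.sum_congr rfl fun ℓ _ => ?_
    rw [mul_assoc, hB ℓ]
  rw [hsum]
  exact Fmain (ω:ℂ) n z
end

section
/- Let ω > 0 be a real number and n ≥ 1 an integer. Then for every z ∈ ℂ, (ω+n)·(d/dz)S_n^ω(z) = n z·(d/dz)S_{n−1}^ω(z) + n(1+ω)·S_{n−1}^ω(z). -/
open Finset Polynomial

lemma poch_shift (ℓ : ℕ) (a : ℂ) :
    (ascPochhammer ℂ ℓ).eval a * (a + ℓ) = a * (ascPochhammer ℂ ℓ).eval (a + 1) := by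
  induction ℓ with
  | zero => simp
  | succ k ih =>
    rw [ascPochhammer_succ_right]
    simp only [Polynomial.eval_mul, Polynomial.eval_add, Polynomial.eval_X,
      Polynomial.eval_natCast]
    push_cast
    linear_combination (a + k + 1) * ih

lemma poch_ne (ω : ℝ) (hω : 0 < ω) (n : ℕ) : ∀ ℓ ≤ n,
    (ascPochhammer ℂ ℓ).eval (-(n : ℂ) - (ω : ℂ)) ≠ 0 := by
  intro ℓ
  induction ℓ with
  | zero => simp
  | succ k ih =>
    intro hk
    rw [ascPochhammer_succ_right]
    simp only [Polynomial.eval_mul, Polynomial.eval_add, Polynomial.eval_X,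
      Polynomial.eval_natCast]
    apply mul_ne_zero (ih (le_trans (Nat.le_succ k) hk))
    have h1 : (-(n : ℂ) - (ω : ℂ) + k) = ((-(n : ℝ) - ω + k : ℝ) : ℂ) := by push_cast; ring
    rw [h1, Complex.ofReal_ne_zero]
    have hkn : (k : ℝ) < n := by exact_mod_cast Nat.lt_of_succ_le hk
    nlinarith

lemma skyburst_deriv (n : ℕ) (ω : ℝ) (z : ℂ) :
    deriv (skyburst n ω) z = ∑ ℓ ∈ Finset.range (n + 1),
      (n.choose ℓ : ℂ) *
        ((ascPochhammer ℂ ℓ).eval (-(ω : ℂ)) / (ascPochhammer ℂ ℓ).eval (-(n : ℂ) - (ω : ℂ))) *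
        (((n - ℓ : ℕ) : ℂ) * z ^ (n - ℓ - 1)) := by
  have h : skyburst n ω = fun z => ∑ ℓ ∈ Finset.range (n + 1),
      (n.choose ℓ : ℂ) *
        ((ascPochhammer ℂ ℓ).eval (-(ω : ℂ)) / (ascPochhammer ℂ ℓ).eval (-(n : ℂ) - (ω : ℂ))) *
        z ^ (n - ℓ) := rfl
  rw [h, deriv_fun_sum (fun ℓ _ => ((differentiableAt_pow _).const_mul _))]
  refine Finset.sum_congr rfl fun ℓ _ => ?_
  rw [deriv_const_mul _ (differentiableAt_pow _), deriv_pow_field]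

theorem skyburst_differential_recurrence (ω : ℝ) (hω : 0 < ω) (n : ℕ) (hn : 1 ≤ n) (z : ℂ) :
    ((ω : ℂ) + (n : ℂ)) * deriv (skyburst n ω) z =
      (n : ℂ) * z * deriv (skyburst (n - 1) ω) z +
        (n : ℂ) * (1 + (ω : ℂ)) * skyburst (n - 1) ω z := by
  obtain ⟨m, rfl⟩ : ∃ m, n = m + 1 := ⟨n - 1, (Nat.succ_pred_eq_of_pos hn).symm⟩
  simp only [Nat.add_sub_cancel]
  rw [skyburst_deriv, skyburst_deriv, skyburst]
  rw [Finset.sum_range_succ (n := m + 1)]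
  simp only [Nat.sub_self, Nat.cast_zero, zero_mul, mul_zero, add_zero]
  rw [Finset.mul_sum, Finset.mul_sum, Finset.mul_sum, ← Finset.sum_add_distrib]
  refine Finset.sum_congr rfl fun ℓ hℓ => ?_
  rw [Finset.mem_range] at hℓ
  have hℓm : ℓ ≤ m := Nat.lt_succ_iff.mp hℓ
  -- key Pochhammer identity
  have hne1 : (ascPochhammer ℂ ℓ).eval (-((m : ℂ) + 1) - (ω : ℂ)) ≠ 0 := by
    have := poch_ne ω hω (m + 1) ℓ (le_trans hℓm (Nat.le_succ m))
    push_cast at this ⊢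
    convert this using 2
  have hne2 : (ascPochhammer ℂ ℓ).eval (-(m : ℂ) - (ω : ℂ)) ≠ 0 := poch_ne ω hω m ℓ hℓm
  have key : (ascPochhammer ℂ ℓ).eval (-((m : ℂ) + 1) - (ω : ℂ)) *
      ((-((m : ℂ) + 1) - (ω : ℂ)) + ℓ) =
      (-((m : ℂ) + 1) - (ω : ℂ)) * (ascPochhammer ℂ ℓ).eval (-(m : ℂ) - (ω : ℂ)) := by
    have := poch_shift ℓ (-((m : ℂ) + 1) - (ω : ℂ))
    rw [this]
    congr 1
    ring_nf
  -- binomial identity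
  have hbin : (((m + 1).choose ℓ : ℕ) : ℂ) * ((m : ℂ) + 1 - (ℓ : ℂ)) =
      ((m.choose ℓ : ℕ) : ℂ) * ((m : ℂ) + 1) := by
    have h2 := congrArg (Nat.cast : ℕ → ℂ) (Nat.choose_mul_succ_eq m ℓ)
    push_cast [Nat.cast_sub (show ℓ ≤ m + 1 by omega)] at h2
    linear_combination -h2
  have he : m + 1 - ℓ - 1 = m - ℓ := by omega
  rw [he, Nat.cast_sub (show ℓ ≤ m + 1 by omega), Nat.cast_sub hℓm]
  push_cast
  have key2 : ((ω : ℂ) + (m : ℂ) + 1) * (ascPochhammer ℂ ℓ).eval (-(m : ℂ) - (ω : ℂ)) =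
      ((m : ℂ) + 1 - (ℓ : ℂ) + ω) * (ascPochhammer ℂ ℓ).eval (-((m : ℂ) + 1) - (ω : ℂ)) := by
    linear_combination key
  have main : ((ω : ℂ) + ((m : ℂ) + 1)) *
      (((m + 1).choose ℓ : ℂ) *
        ((ascPochhammer ℂ ℓ).eval (-(ω : ℂ)) / (ascPochhammer ℂ ℓ).eval (-((m : ℂ) + 1) - (ω : ℂ)))) *
      ((m : ℂ) + 1 - (ℓ : ℂ)) =
      ((m : ℂ) + 1) *
      ((m.choose ℓ : ℂ) *
        ((ascPochhammer ℂ ℓ).eval (-(ω : ℂ)) / (ascPochhammer ℂ ℓ).eval (-(m : ℂ) - (ω : ℂ)))) *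
      (((m : ℂ) + 1 - (ℓ : ℂ)) + ω) := by
    set a1 := (ascPochhammer ℂ ℓ).eval (-((m : ℂ) + 1) - (ω : ℂ)) with ha1
    set a2 := (ascPochhammer ℂ ℓ).eval (-(m : ℂ) - (ω : ℂ)) with ha2
    set p := (ascPochhammer ℂ ℓ).eval (-(ω : ℂ)) with hp
    field_simp
    linear_combination (p * ((ω : ℂ) + (m : ℂ) + 1) * a2) * hbin +
      (p * ((m.choose ℓ : ℕ) : ℂ) * ((m : ℂ) + 1)) * key2
  rcases eq_or_lt_of_le hℓm with rfl | hlt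
  · simp only [Nat.sub_self, Nat.zero_sub, pow_zero]
    linear_combination main
  · have hz : z ^ (m - ℓ) = z * z ^ (m - ℓ - 1) := by
      conv_lhs => rw [show m - ℓ = (m - ℓ - 1) + 1 by omega]
      rw [pow_succ']
    rw [hz]
    linear_combination (z * z ^ (m - ℓ - 1)) * main
end

section
/- Let n ≥ 1 be an integer and let m be an integer with 0 ≤ m ≤ n−1. Then the polynomial S_n^m has a zero at the origin of multiplicity exactly n−m; that is, S_n^m(z) = z^{n−m}·S_m^n(z) for all z ∈ ℂ, and S_m^n(0) = (n!)²/((n−m)!(n+m)!) ≠ 0. -/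
open Finset Polynomial

lemma asc_eval_neg_nat (k ℓ : ℕ) :
    (ascPochhammer ℂ ℓ).eval (-(k : ℂ)) = (-1) ^ ℓ * (k.descFactorial ℓ : ℂ) := by
  rw [ascPochhammer_eval_neg_eq_descPochhammer, descPochhammer_eval_eq_descFactorial]

lemma descFac_ne_zero {k ℓ : ℕ} (h : ℓ ≤ k) : (k.descFactorial ℓ : ℂ) ≠ 0 := by
  have : k.descFactorial ℓ ≠ 0 := fun hh =>
    absurd (Nat.descFactorial_eq_zero_iff_lt.mp hh) (by omega)
  exact_mod_cast this

lemma choose_descFac_swap (n m ℓ : ℕ) :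
    n.choose ℓ * m.descFactorial ℓ = m.choose ℓ * n.descFactorial ℓ := by
  rw [Nat.descFactorial_eq_factorial_mul_choose, Nat.descFactorial_eq_factorial_mul_choose]
  ring

theorem skyburst_zero_at_origin_multiplicity (n : ℕ) (hn : 1 ≤ n) (m : ℕ) (hm : m ≤ n - 1) :
    (∀ z : ℂ, skyburst n (m : ℝ) z = z ^ (n - m) * skyburst m (n : ℝ) z) ∧
      skyburst m (n : ℝ) 0 =
        (n.factorial : ℂ) ^ 2 / (((n - m).factorial : ℂ) * ((n + m).factorial : ℂ)) ∧
      skyburst m (n : ℝ) 0 ≠ 0 := by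
  have hmn : m < n := by omega
  -- normalize casted arguments
  have hden : ∀ ℓ : ℕ, (ascPochhammer ℂ ℓ).eval (-(n : ℂ) - (m : ℂ))
      = (-1) ^ ℓ * ((n + m).descFactorial ℓ : ℂ) := by
    intro ℓ
    have h : -(n : ℂ) - (m : ℂ) = -(((n + m : ℕ)) : ℂ) := by push_cast; ring
    rw [h, asc_eval_neg_nat]
  have hden' : ∀ ℓ : ℕ, (ascPochhammer ℂ ℓ).eval (-(m : ℂ) - (n : ℂ))
      = (-1) ^ ℓ * ((n + m).descFactorial ℓ : ℂ) := by
    intro ℓ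
    rw [show -(m : ℂ) - (n : ℂ) = -(n : ℂ) - (m : ℂ) by ring, hden]
  have key : ∀ z : ℂ, skyburst n (m : ℝ) z = z ^ (n - m) * skyburst m (n : ℝ) z := by
    intro z
    unfold skyburst
    simp only [Complex.ofReal_natCast]
    rw [Finset.mul_sum]
    rw [← Finset.sum_subset (Finset.range_subset_range.mpr (by omega : m + 1 ≤ n + 1))
      (fun ℓ _ hℓ => by
        have hℓ' : m < ℓ := by
          simp only [Finset.mem_range, not_lt] at hℓ; omega
        rw [ascPochhammer_eval_neg_coe_nat_of_lt hℓ']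
        simp)]
    refine Finset.sum_congr rfl fun ℓ hℓ => ?_
    have hℓm : ℓ ≤ m := by simpa [Nat.lt_succ_iff] using hℓ
    have hz : z ^ (n - m) * z ^ (m - ℓ) = z ^ (n - ℓ) := by
      rw [← pow_add]; congr 1; omega
    rw [asc_eval_neg_nat m ℓ, asc_eval_neg_nat n ℓ, hden, hden',
      show z ^ (n - m) * ((m.choose ℓ : ℂ) *
        ((-1) ^ ℓ * ((n.descFactorial ℓ : ℂ)) / ((-1) ^ ℓ * ((n + m).descFactorial ℓ : ℂ))) *
        z ^ (m - ℓ)) = (m.choose ℓ : ℂ) *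
        ((-1) ^ ℓ * ((n.descFactorial ℓ : ℂ)) / ((-1) ^ ℓ * ((n + m).descFactorial ℓ : ℂ))) *
        (z ^ (n - m) * z ^ (m - ℓ)) by ring, hz]
    have hdne : ((n + m).descFactorial ℓ : ℂ) ≠ 0 := descFac_ne_zero (by omega)
    have hne : ((-1 : ℂ)) ^ ℓ ≠ 0 := pow_ne_zero _ (by norm_num)
    field_simp
    have h' : (n.choose ℓ : ℂ) * (m.descFactorial ℓ : ℂ)
        = (m.choose ℓ : ℂ) * (n.descFactorial ℓ : ℂ) := by
      exact_mod_cast choose_descFac_swap n m ℓ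
    linear_combination z ^ (n - ℓ) * h'
  have hval : skyburst m (n : ℝ) 0 =
      (n.factorial : ℂ) ^ 2 / (((n - m).factorial : ℂ) * ((n + m).factorial : ℂ)) := by
    unfold skyburst
    simp only [Complex.ofReal_natCast]
    rw [Finset.sum_eq_single_of_mem m (by simp)]
    · rw [asc_eval_neg_nat n m, hden' m]
      have h1 : n.descFactorial m * (n - m).factorial = n.factorial := by
        rw [Nat.descFactorial_eq_factorial_mul_choose]
        rw [← Nat.choose_mul_factorial_mul_factorial (le_of_lt hmn)]
        ring
      have h2 : (n + m).descFactorial m * n.factorial = (n + m).factorial := by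
        rw [Nat.descFactorial_eq_factorial_mul_choose]
        have := Nat.choose_mul_factorial_mul_factorial (show m ≤ n + m by omega)
        rw [show n + m - m = n by omega] at this
        rw [← this]; ring
      have hd1 : ((n + m).descFactorial m : ℂ) ≠ 0 := descFac_ne_zero (by omega)
      have hd2 : ((n - m).factorial : ℂ) ≠ 0 := by exact_mod_cast (n - m).factorial_ne_zero
      have hd3 : ((n + m).factorial : ℂ) ≠ 0 := by exact_mod_cast (n + m).factorial_ne_zero
      have hne : ((-1 : ℂ)) ^ m ≠ 0 := pow_ne_zero _ (by norm_num)
      simp only [Nat.choose_self, Nat.cast_one, one_mul, Nat.sub_self, pow_zero, mul_one]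
      field_simp
      have : (n.descFactorial m : ℂ) * ((n - m).factorial : ℂ) = (n.factorial : ℂ) :=
        by exact_mod_cast congrArg (Nat.cast : ℕ → ℂ) h1
      have h2' : ((n + m).descFactorial m : ℂ) * (n.factorial : ℂ) = ((n + m).factorial : ℂ) :=
        by exact_mod_cast congrArg (Nat.cast : ℕ → ℂ) h2
      linear_combination ((n + m).factorial : ℂ) * this -
        (n.factorial : ℂ) * h2'
    · intro ℓ hℓ hℓm
      have : 0 < m - ℓ := by
        simp only [Finset.mem_range, Nat.lt_succ_iff] at hℓ
        omega
      rw [zero_pow (by omega : m - ℓ ≠ 0)]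
      ring
  refine ⟨key, hval, ?_⟩
  rw [hval]
  have hd2 : ((n - m).factorial : ℂ) ≠ 0 := by exact_mod_cast (n - m).factorial_ne_zero
  have hd3 : ((n + m).factorial : ℂ) ≠ 0 := by exact_mod_cast (n + m).factorial_ne_zero
  have hd4 : (n.factorial : ℂ) ≠ 0 := by exact_mod_cast n.factorial_ne_zero
  exact div_ne_zero (pow_ne_zero 2 hd4) (mul_ne_zero hd2 hd3)
end
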